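/- arXiv:1908.01635 — 6 statements merged into one kernel-verified Lean document; each statement's English description precedes it below -/
import Mathlib

section
/- For each upward closed subset U of the n-universal model T(n) there is a NNIL-formula β⁺(U) in the variables p_1,…,p_n such that for every node T_u of T(n): T(n), T_u ⊨ β⁺(U) if and only if T_u ∈ U. (Hence T(n) is an exact model: every upset of T(n) is definable by a NNIL-formula.) -/
/-! ## Formulas of intuitionistic propositional logic -/

inductive Formula : Type
  | bot : Formula
  | var : ℕ → Formula
  | and : Formula → Formula → Formula
  | or  : Formula → Formula → Formula
  | imp : Formula → Formula → Formula
  deriving DecidableEq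

namespace Formula

def top : Formula := imp bot bot

def iff_ (φ ψ : Formula) : Formula := and (imp φ ψ) (imp ψ φ)

/-- `φ` contains no implication at all. -/
def noImp : Formula → Prop
  | bot => True
  | var _ => True
  | and φ ψ => noImp φ ∧ noImp ψ
  | or φ ψ => noImp φ ∧ noImp ψ
  | imp _ _ => False

/-- NNIL-formulas: no nesting of implications to the left. -/
def IsNNIL : Formula → Prop
  | bot => True
  | var _ => True
  | and φ ψ => IsNNIL φ ∧ IsNNIL ψ
  | or φ ψ => IsNNIL φ ∧ IsNNIL ψ
  | imp φ ψ => noImp φ ∧ IsNNIL ψ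

/-- `φ` is an `n`-formula: all its propositional variables are among `p_0, …, p_{n-1}`. -/
def varsBelow (n : ℕ) : Formula → Prop
  | bot => True
  | var p => p < n
  | and φ ψ => varsBelow n φ ∧ varsBelow n ψ
  | or φ ψ => varsBelow n φ ∧ varsBelow n ψ
  | imp φ ψ => varsBelow n φ ∧ varsBelow n ψ

/-- the propositional variable `p` occurs in the formula -/
def occurs (p : ℕ) : Formula → Prop
  | bot => False
  | var q => q = p
  | and φ ψ => occurs p φ ∨ occurs p ψ
  | or φ ψ => occurs p φ ∨ occurs p ψ
  | imp φ ψ => occurs p φ ∨ occurs p ψ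

/-- uniform substitution -/
def subst (σ : ℕ → Formula) : Formula → Formula
  | bot => bot
  | var p => σ p
  | and φ ψ => and (subst σ φ) (subst σ ψ)
  | or φ ψ => or (subst σ φ) (subst σ ψ)
  | imp φ ψ => imp (subst σ φ) (subst σ ψ)

end Formula

/-- finite conjunction (empty conjunction is ⊤) -/
def listAnd : List Formula → Formula
  | [] => Formula.top
  | φ :: l => Formula.and φ (listAnd l)

/-- finite disjunction (empty disjunction is ⊥) -/
def listOr : List Formula → Formula
  | [] => Formula.bot
  | φ :: l => Formula.or φ (listOr l)

/-! ## Kripke structures, models and satisfaction -/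

/-- raw Kripke structure: worlds, relation, Boolean valuation -/
structure KStruct where
  W : Type
  R : W → W → Prop
  V : W → ℕ → Bool

namespace KStruct

/-- a Kripke model: `R` is a partial order and `V` is persistent -/
def IsModel (M : KStruct) : Prop :=
  (∀ w, M.R w w) ∧
  (∀ w u v, M.R w u → M.R u v → M.R w v) ∧
  (∀ w u, M.R w u → M.R u w → w = u) ∧
  (∀ w u p, M.R w u → M.V w p = true → M.V u p = true)

/-- an `n`-model: a Kripke model whose valuation is restricted to the variables `p_0,…,p_{n-1}` -/
def IsNModel (M : KStruct) (n : ℕ) : Prop :=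
  M.IsModel ∧ ∀ w p, n ≤ p → M.V w p = false

/-- intuitionistic satisfaction -/
def sat (M : KStruct) : M.W → Formula → Prop
  | _, Formula.bot => False
  | w, Formula.var p => M.V w p = true
  | w, Formula.and φ ψ => M.sat w φ ∧ M.sat w ψ
  | w, Formula.or φ ψ => M.sat w φ ∨ M.sat w ψ
  | w, Formula.imp φ ψ => ∀ u, M.R w u → M.sat u φ → M.sat u ψ

/-- the submodel on a subset of the worlds -/
def restrict (M : KStruct) (S : Set M.W) : KStruct where
  W := S
  R := fun a b => M.R a.1 b.1
  V := fun a p => M.V a.1 p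

end KStruct

/-- monotonic map between Kripke structures: preserves the order and the colors -/
def Monotonic (M N : KStruct) (f : M.W → N.W) : Prop :=
  (∀ w u, M.R w u → N.R (f w) (f u)) ∧ (∀ w p, N.V (f w) p = M.V w p)

/-- p-morphism: a monotonic map satisfying the forth condition -/
def PMorphism (M N : KStruct) (f : M.W → N.W) : Prop :=
  Monotonic M N f ∧ ∀ w u', N.R (f w) u' → ∃ u, M.R w u ∧ f u = u'

/-- MR: the class of formulas reflected by monotonic maps between Kripke models -/
def MR (φ : Formula) : Prop :=
  ∀ (N M : KStruct), N.IsModel → M.IsModel →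
    ∀ f : N.W → M.W, Monotonic N M f → ∀ w : N.W, M.sat (f w) φ → N.sat w φ

/-- `r` is a root of `M` -/
def IsRoot (M : KStruct) (r : M.W) : Prop := ∀ w, M.R r w

/-- `M` is tree-like with root `r`: rooted, and each point has a finite,
linearly ordered set of predecessors -/
def IsTree (M : KStruct) (r : M.W) : Prop :=
  IsRoot M r ∧ (∀ w : M.W, {u | M.R u w}.Finite) ∧
  (∀ w u v : M.W, M.R u w → M.R v w → (M.R u v ∨ M.R v u))

/-- `u` is an immediate (proper) successor of `w` -/
def ImmSucc (M : KStruct) (w u : M.W) : Prop :=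
  M.R w u ∧ w ≠ u ∧ ∀ v, M.R w v → M.R v u → v = w ∨ v = u

/-- `S` carries a color-preserving submodel of `M` -/
def ColorPresSub (M : KStruct) (S : Set M.W) : Prop :=
  ∀ w ∈ S, ∀ u, M.R w u → ∃ v ∈ S, M.R w v ∧ ∀ p, M.V v p = M.V u p

/-! ## The β-formulas of finite models -/

/-- the variables among `p_0,…,p_{n-1}` true at `w` -/
def propList (M : KStruct) (n : ℕ) (w : M.W) : List Formula :=
  ((List.range n).filter (fun p => M.V w p)).map Formula.var

/-- the variables among `p_0,…,p_{n-1}` false at `w` -/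
def notpropList (M : KStruct) (n : ℕ) (w : M.W) : List Formula :=
  ((List.range n).filter (fun p => !(M.V w p))).map Formula.var

open Classical in
/-- the immediate successors of `w`, as a list -/
noncomputable def immSuccList (M : KStruct) [Fintype M.W] (w : M.W) : List M.W :=
  (Finset.univ.filter (fun u => ImmSucc M w u)).toList

/-- β(w), defined by recursion on the depth of `w` (computed with enough fuel):
`β(w) = ⋀prop(w) → (⋁notprop(w) ∨ β(w_1) ∨ … ∨ β(w_k))` where the `w_i` are the
immediate successors of `w` (for maximal `w` the last disjunct is the empty disjunction). -/
noncomputable def betaFuel (M : KStruct) [Fintype M.W] (n : ℕ) : ℕ → M.W → Formula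
  | 0, _ => Formula.bot
  | (k+1), w =>
      Formula.imp (listAnd (propList M n w))
        (listOr (notpropList M n w ++ (immSuccList M w).map (fun u => betaFuel M n k u)))

/-- β(w) for a point `w` of a finite `n`-model: `Fintype.card M.W` is an upper bound
for the depth of any point, so the recursion above never runs out of fuel. -/
noncomputable def beta (M : KStruct) [inst : Fintype M.W] (n : ℕ) (w : M.W) : Formula :=
  betaFuel M n (Fintype.card M.W) w

/-! ## Unravelings -/

/-- the unraveling `T_N` of a rooted model `(N, r)`: points are the finite sequences
`⟨r, w_1, …, w_k⟩` in which each entry is an immediate successor of the preceding one,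
ordered by the initial-segment relation; such a sequence satisfies the same variables
as its last entry. -/
def Unravel (M : KStruct) (r : M.W) : KStruct where
  W := {l : List M.W // l.head? = some r ∧ List.Chain' (ImmSucc M) l}
  R := fun σ τ => σ.1 <+: τ.1
  V := fun σ p => (σ.1.getLast?.map (fun w => M.V w p)).getD false

/-! ## Kripke frames -/

structure KFrame where
  W : Type
  R : W → W → Prop

namespace KFrame

/-- a Kripke frame: `R` is a partial order -/
def IsFrame (F : KFrame) : Prop :=
  (∀ w, F.R w w) ∧ (∀ w u v, F.R w u → F.R u v → F.R w v) ∧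
  (∀ w u, F.R w u → F.R u w → w = u)

def Persistent (F : KFrame) (V : F.W → ℕ → Bool) : Prop :=
  ∀ w u p, F.R w u → V w p = true → V u p = true

/-- the model on `F` given by a valuation -/
def model (F : KFrame) (V : F.W → ℕ → Bool) : KStruct := ⟨F.W, F.R, V⟩

/-- `F ⊨ φ` : `φ` is true at every point of every model on `F` -/
def valid (F : KFrame) (φ : Formula) : Prop :=
  ∀ V, F.Persistent V → ∀ w, (F.model V).sat w φ

/-- the substructure of `F` on a subset `S` of its domain, with the restricted order -/
def restrictF (F : KFrame) (S : Set F.W) : KFrame :=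
  ⟨S, fun a b => F.R a.1 b.1⟩

end KFrame

/-- a monotonic map from a model `N` into a frame `F` which is color-consistent:
`f(w) R f(u)` implies `col(w) ≤ col(u)` -/
def ColorConsistentMap (N : KStruct) (F : KFrame) (f : N.W → F.W) : Prop :=
  (∀ w u, N.R w u → F.R (f w) (f u)) ∧
  (∀ w u, F.R (f w) (f u) → ∀ p, N.V w p = true → N.V u p = true)


/-! ## The n-universal model 𝒯(n) for NNIL -/

/-- an `n`-color -/
abbrev Col (n : ℕ) := Fin n → Bool

/-- componentwise order on colors -/
def ColLE {n : ℕ} (c d : Col n) : Prop := ∀ i, c i = true → d i = true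

def ColLT {n : ℕ} (c d : Col n) : Prop := ColLE c d ∧ c ≠ d

/-- finite colored trees: a root color together with the list of subtrees
hanging above the root -/
inductive CTree (n : ℕ) : Type
  | node : Col n → List (CTree n) → CTree n

namespace CTree

variable {n : ℕ}

def color : CTree n → Col n
  | node c _ => c

def children : CTree n → List (CTree n)
  | node _ ts => ts

/-- the subtree of `t` at a position (a list of child indices) -/
def subt : List ℕ → CTree n → Option (CTree n)
  | [], t => some t
  | i :: l, t => (t.children[i]?).bind (subt l)

/-- the finite tree-like `n`-model determined by a colored tree: its worlds are
the positions of `t`, ordered by the initial-segment relation, and a position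
satisfies `p_i` iff the color of the subtree there is `1` at `i`. -/
def toModel (t : CTree n) : KStruct where
  W := {l : List ℕ // (subt l t).isSome = true}
  R := fun a b => a.1 <+: b.1
  V := fun a p =>
    if h : p < n then ((subt a.1 t).map (fun s => s.color ⟨p, h⟩)).getD false
    else false

/-- the root of the model of a tree -/
def root (t : CTree n) : t.toModel.W := ⟨[], rfl⟩

/-- an injective code of colors -/
def colCode (c : Col n) : ℕ := ∑ i : Fin n, (if c i then 2 ^ (i : ℕ) else 0)

/-- an injective code of lists of numbers -/
def listCode : List ℕ → ℕ
  | [] => 0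
  | a :: l => Nat.pair a (listCode l) + 1

/-- an injective code of colored trees, used to order the children of every node of a
tree in the universal model canonically -/
def code : CTree n → ℕ
  | node c ts => Nat.pair (colCode c) (listCode (ts.attach.map (fun x => code x.1)))
decreasing_by
  have := List.sizeOf_lt_of_mem x.2
  simp only [CTree.node.sizeOf_spec]
  omega

end CTree

/-- `MLE s t` (`s ≤ t`): there is a monotonic map from (the model of) `t` into `s` -/
def MLE {n : ℕ} (s t : CTree n) : Prop :=
  ∃ f : t.toModel.W → s.toModel.W, Monotonic t.toModel s.toModel f

/-- membership in the domain of the universal model `𝒯(n)`, built in layers: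
layer 1 consists of the one-point trees (one for each color); a tree of a later layer
is built from a set `X` of pairwise `≤`-incomparable trees of earlier layers (encoded
as a list sorted canonically by `code`) by adding a fresh root below whose color is
strictly smaller than every color occurring in the trees of `X`. -/
inductive UMem : {n : ℕ} → CTree n → Prop
  | single {n : ℕ} (c : Col n) : UMem (CTree.node c [])
  | step {n : ℕ} (c : Col n) (ts : List (CTree n)) :
      ts ≠ [] →
      (∀ t ∈ ts, UMem t) →
      List.Chain' (fun a b => CTree.code a < CTree.code b) ts →
      (∀ t ∈ ts, ∀ s ∈ ts, t ≠ s → ¬ MLE t s) →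
      (∀ t ∈ ts, ∀ (l : List ℕ) (s : CTree n), CTree.subt l t = some s →
        ColLT c s.color) →
      UMem (CTree.node c ts)

/-- the universal model `𝒯(n)`: its points are the trees in `UMem`, ordered by `≤`
(where `T_w ≤ T_u` iff there is a monotonic map from `T_u` into `T_w`), and the color
of a node is the color of the root of the corresponding tree. -/
def UnivModel (n : ℕ) : KStruct where
  W := {t : CTree n // UMem t}
  R := fun a b => MLE a.1 b.1
  V := fun a p => if h : p < n then a.1.color ⟨p, h⟩ else false

/-- mutual monotonic mappability (`≡`) of Kripke structures -/
def MEquiv (A B : KStruct) : Prop :=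
  (∃ f : B.W → A.W, Monotonic B A f) ∧ (∃ g : A.W → B.W, Monotonic A B g)



/-! ## Auxiliary development for the proof -/

namespace NNILAux

open CTree Formula

variable {n : ℕ}

/-! ### subtree lemmas -/

lemma subt_append (l₁ l₂ : List ℕ) (t : CTree n) :
    subt (l₁ ++ l₂) t = (subt l₁ t).bind (subt l₂) := by
  induction l₁ generalizing t with
  | nil => simp [subt]
  | cons i l ih =>
      simp only [List.cons_append, subt, Option.bind_assoc]
      congr 1
      funext s
      exact ih s

lemma umem_children {c : Col n} {ts : List (CTree n)} (h : UMem (CTree.node c ts)) :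
    ∀ s ∈ ts, UMem s := by
  cases h with
  | single => intro s hs; simp at hs
  | step c ts h1 h2 h3 h4 h5 => exact h2

lemma umem_chain {c : Col n} {ts : List (CTree n)}
    (h : UMem (CTree.node c ts)) :
    List.Chain' (fun a b => CTree.code a < CTree.code b) ts := by
  cases h with
  | single => exact List.isChain_nil
  | step c ts h1 h2 h3 h4 h5 => exact h3

lemma umem_colLT {c : Col n} {ts : List (CTree n)} (h : UMem (CTree.node c ts)) :
    ∀ t ∈ ts, ∀ (l : List ℕ) (s : CTree n), CTree.subt l t = some s → ColLT c s.color := by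
  cases h with
  | single => intro t ht; simp at ht
  | step c ts h1 h2 h3 h4 h5 => exact h5

lemma umem_subt : ∀ (l : List ℕ) {t s : CTree n}, UMem t → subt l t = some s → UMem s := by
  intro l
  induction l with
  | nil => intro t s ht h; simp [subt] at h; exact h ▸ ht
  | cons i l ih =>
      intro t s ht h
      simp only [subt] at h
      obtain ⟨t', ht', hs⟩ := Option.bind_eq_some_iff.mp h
      obtain ⟨c, ts⟩ := t
      have hmem : t' ∈ ts := List.mem_of_getElem? ht'
      exact ih (umem_children ht t' hmem) hs

lemma umem_colLE {t s : CTree n} {l : List ℕ} (ht : UMem t) (h : subt l t = some s) :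
    ColLE t.color s.color := by
  cases l with
  | nil =>
      simp [subt] at h
      subst h; intro i hi; exact hi
  | cons i l =>
      simp only [subt] at h
      obtain ⟨t', ht', hs⟩ := Option.bind_eq_some_iff.mp h
      obtain ⟨c, ts⟩ := t
      have hmem : t' ∈ ts := List.mem_of_getElem? ht'
      exact (umem_colLT ht t' hmem l s hs).1

lemma toModel_V {t : CTree n} (a : t.toModel.W) {s : CTree n}
    (hs : subt a.1 t = some s) (p : ℕ) :
    t.toModel.V a p = if h : p < n then s.color ⟨p, h⟩ else false := by
  obtain ⟨l, hl⟩ := a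
  simp [CTree.toModel, hs]

/-- the root of `t.toModel` -/
def rt (t : CTree n) : t.toModel.W := ⟨[], rfl⟩

lemma toModel_V_rt (t : CTree n) (p : ℕ) :
    t.toModel.V (rt t) p = if h : p < n then t.color ⟨p, h⟩ else false :=
  toModel_V (rt t) rfl p

lemma toModel_V_cons {c : Col n} {ts : List (CTree n)} {i : ℕ} {l : List ℕ}
    (hi : i < ts.length) (h1 : (subt (i :: l) (CTree.node c ts)).isSome = true)
    (h2 : (subt l ts[i]).isSome = true) (p : ℕ) :
    (CTree.node c ts).toModel.V ⟨i :: l, h1⟩ p = (ts[i]).toModel.V ⟨l, h2⟩ p := by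
  obtain ⟨s, hs⟩ := Option.isSome_iff_exists.mp h2
  have hx : subt (i :: l) (CTree.node c ts) = some s := by
    simp only [subt, CTree.children, List.getElem?_eq_getElem hi, Option.bind_some]
    exact hs
  exact (toModel_V (t := CTree.node c ts) ⟨i :: l, h1⟩ hx p).trans (toModel_V (t := ts[i]) ⟨l, h2⟩ hs p).symm

/-! ### MLE basics -/

lemma mle_refl (t : CTree n) : MLE t t := ⟨id, fun _ _ h => h, fun _ _ => rfl⟩

lemma mle_trans {a b c : CTree n} (h1 : MLE a b) (h2 : MLE b c) : MLE a c := by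
  obtain ⟨f, hf1, hf2⟩ := h1
  obtain ⟨g, hg1, hg2⟩ := h2
  exact ⟨f ∘ g, fun w u h => hf1 _ _ (hg1 _ _ h), fun w p => (hf2 (g w) p).trans (hg2 w p)⟩

lemma mle_of_subt {m s : CTree n} {pos : List ℕ} (hs : subt pos m = some s) : MLE m s := by
  refine ⟨fun l => ⟨pos ++ l.1, ?_⟩, fun a b h => ?_, fun a p => ?_⟩
  · rw [subt_append, hs, Option.bind_some]; exact l.2
  · exact (List.prefix_append_right_inj pos).mpr h
  · obtain ⟨s', hs'⟩ := Option.isSome_iff_exists.mp a.2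
    have hx : subt (pos ++ a.1) m = some s' := by
      rw [subt_append, hs, Option.bind_some]; exact hs'
    rw [toModel_V (t := m) ⟨pos ++ a.1, by rw [subt_append, hs, Option.bind_some]; exact a.2⟩ hx, toModel_V a hs']

/-! ### gluing monotonic maps -/

/-- glue maps on the children into a map from `node c ts` -/
def glueFun (m : CTree n) (c : Col n) (ts : List (CTree n))
    (g : ∀ t ∈ ts, t.toModel.W → m.toModel.W) :
    (CTree.node c ts).toModel.W → m.toModel.W := fun x =>
  match x with
  | ⟨[], _⟩ => rt m
  | ⟨i :: l, h⟩ =>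
      have hi : i < ts.length := by
        by_contra hc
        rw [subt, CTree.children, List.getElem?_eq_none (by omega)] at h
        simp at h
      have hl : (subt l ts[i]).isSome = true := by
        rw [subt, CTree.children, List.getElem?_eq_getElem hi, Option.bind_some] at h
        exact h
      g ts[i] (List.getElem_mem hi) ⟨l, hl⟩

lemma glue {m : CTree n} {c : Col n} {ts : List (CTree n)}
    (hc : m.color = c) (hg : ∀ t ∈ ts, MLE m t) : MLE m (CTree.node c ts) := by
  choose g hmono using hg
  refine ⟨glueFun m c ts g, fun a b h => ?_, fun a p => ?_⟩
  · obtain ⟨la, ha⟩ := a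
    obtain ⟨lb, hb⟩ := b
    cases la with
    | nil => exact List.nil_prefix
    | cons i la =>
        cases lb with
        | nil => exact absurd (List.prefix_nil.mp h) (by simp)
        | cons j lb =>
            obtain ⟨rfl, hpre⟩ := List.cons_prefix_cons.mp h
            have hi : i < ts.length := by
              by_contra hc'
              rw [subt, CTree.children, List.getElem?_eq_none (by omega)] at ha
              simp at ha
            have hla : (subt la ts[i]).isSome = true := by
              rw [subt, CTree.children, List.getElem?_eq_getElem hi, Option.bind_some] at ha
              exact ha
            have hlb : (subt lb ts[i]).isSome = true := by
              rw [subt, CTree.children, List.getElem?_eq_getElem hi, Option.bind_some] at hb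
              exact hb
            exact (hmono ts[i] (List.getElem_mem hi)).1 ⟨la, hla⟩ ⟨lb, hlb⟩ hpre
  · obtain ⟨la, ha⟩ := a
    cases la with
    | nil =>
        show m.toModel.V (rt m) p = (CTree.node c ts).toModel.V ⟨[], ha⟩ p
        rw [toModel_V_rt, toModel_V (t := CTree.node c ts) ⟨[], ha⟩ (show subt [] (CTree.node c ts) = some _ from rfl), hc]
        rfl
    | cons i la =>
        have hi : i < ts.length := by
          by_contra hc'
          rw [subt, CTree.children, List.getElem?_eq_none (by omega)] at ha
          simp at ha
        have hl : (subt la ts[i]).isSome = true := by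
          rw [subt, CTree.children, List.getElem?_eq_getElem hi, Option.bind_some] at ha
          exact ha
        show m.toModel.V (g ts[i] (List.getElem_mem hi) ⟨la, hl⟩) p
            = (CTree.node c ts).toModel.V ⟨i :: la, ha⟩ p
        rw [(hmono ts[i] (List.getElem_mem hi)).2 ⟨la, hl⟩ p]
        exact (toModel_V_cons hi ha hl p).symm

/-! ### ungluing: restriction of a monotonic map to children -/

lemma unglue {m : CTree n} {c : Col n} {ts : List (CTree n)}
    (h : MLE m (CTree.node c ts)) :
    ∃ (pos : List ℕ) (s : CTree n), subt pos m = some s ∧ s.color = c ∧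
      ∀ t ∈ ts, MLE s t := by
  obtain ⟨f, hf1, hf2⟩ := h
  set r0 : (CTree.node c ts).toModel.W := ⟨[], rfl⟩ with hr0
  obtain ⟨s, hs⟩ := Option.isSome_iff_exists.mp (f r0).2
  refine ⟨(f r0).1, s, hs, ?_, ?_⟩
  · funext i
    have hx := hf2 r0 i.1
    rw [toModel_V _ hs] at hx
    rw [toModel_V _ (show subt r0.1 (CTree.node c ts) = some _ from rfl)] at hx
    simpa [i.2, CTree.color] using hx
  · intro t ht
    obtain ⟨i, hi, rfl⟩ := List.mem_iff_getElem.mp ht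
    have hpre : ∀ (x : (CTree.node c ts).toModel.W), (f r0).1 <+: (f x).1 := by
      intro x
      exact hf1 r0 x List.nil_prefix
    have hmem : ∀ (l : List ℕ), (subt l ts[i]).isSome = true →
        (subt (i :: l) (CTree.node c ts)).isSome = true := by
      intro l hl
      rw [subt, CTree.children, List.getElem?_eq_getElem hi, Option.bind_some]
      exact hl
    have hsub : ∀ (x : (CTree.node c ts).toModel.W),
        (subt ((f x).1.drop (f r0).1.length) s).isSome = true ∧
        subt ((f x).1.drop (f r0).1.length) s = subt (f x).1 m := by
      intro x
      have heq : (f r0).1 ++ ((f x).1.drop (f r0).1.length) = (f x).1 :=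
        List.prefix_iff_eq_append.mp (hpre x)
      have : subt (f x).1 m = subt ((f x).1.drop (f r0).1.length) s := by
        conv_lhs => rw [← heq]
        rw [subt_append, hs, Option.bind_some]
      refine ⟨?_, this.symm⟩
      rw [← this]; exact (f x).2
    refine ⟨fun l => ⟨(f ⟨i :: l.1, hmem l.1 l.2⟩).1.drop (f r0).1.length,
        (hsub ⟨i :: l.1, hmem l.1 l.2⟩).1⟩, fun a b hab => ?_, fun a p => ?_⟩
    · show List.IsPrefix _ _
      have h1 : (f ⟨i :: a.1, hmem a.1 a.2⟩).1 <+: (f ⟨i :: b.1, hmem b.1 b.2⟩).1 :=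
        hf1 ⟨i :: a.1, hmem a.1 a.2⟩ ⟨i :: b.1, hmem b.1 b.2⟩
          (List.cons_prefix_cons.mpr ⟨rfl, hab⟩)
      have ha' := List.prefix_iff_eq_append.mp (hpre ⟨i :: a.1, hmem a.1 a.2⟩)
      have hb' := List.prefix_iff_eq_append.mp (hpre ⟨i :: b.1, hmem b.1 b.2⟩)
      rw [← ha', ← hb'] at h1
      exact (List.prefix_append_right_inj _).mp h1
    · set x : (CTree.node c ts).toModel.W := ⟨i :: a.1, hmem a.1 a.2⟩ with hx
      obtain ⟨s', hs'⟩ := Option.isSome_iff_exists.mp (f x).2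
      have hss : subt ((f x).1.drop (f r0).1.length) s = some s' := by
        rw [(hsub x).2]; exact hs'
      have e1 : s.toModel.V ⟨(f x).1.drop (f r0).1.length, (hsub x).1⟩ p
          = m.toModel.V (f x) p := by
        rw [toModel_V (t := s) ⟨_, (hsub x).1⟩ hss, toModel_V (f x) hs']
      rw [e1, hf2 x p]
      exact toModel_V_cons hi (hmem a.1 a.2) a.2 p

/-! ### formula helpers -/

/-- nonempty conjunction -/
def conj1 : Formula → List Formula → Formula
  | φ, [] => φ
  | φ, ψ :: l => Formula.and φ (conj1 ψ l)

/-- implication with a (possibly empty) list of antecedents -/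
def impC : List Formula → Formula → Formula
  | [], d => d
  | φ :: l, d => Formula.imp (conj1 φ l) d

def trueVars (c : Col n) : List Formula :=
  ((List.finRange n).filter (fun i => c i)).map (fun i => Formula.var i.1)

def falseVars (c : Col n) : List Formula :=
  ((List.finRange n).filter (fun i => !c i)).map (fun i => Formula.var i.1)

/-- the β-formula of a colored tree -/
def nbeta : CTree n → Formula
  | .node c ts =>
      impC (trueVars c) (listOr (falseVars c ++ ts.attach.map (fun x => nbeta x.1)))
decreasing_by
  have := List.sizeOf_lt_of_mem x.2
  simp only [CTree.node.sizeOf_spec]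
  omega

/-! ### syntactic properties -/

lemma noImp_conj1 {φ : Formula} {l : List Formula} (h : φ.noImp) (hl : ∀ ψ ∈ l, ψ.noImp) :
    (conj1 φ l).noImp := by
  induction l generalizing φ with
  | nil => exact h
  | cons ψ l ih =>
      exact ⟨h, ih (hl ψ (by simp)) (fun χ hχ => hl χ (by simp [hχ]))⟩

lemma varsBelow_conj1 {φ : Formula} {l : List Formula} (h : φ.varsBelow n)
    (hl : ∀ ψ ∈ l, ψ.varsBelow n) : (conj1 φ l).varsBelow n := by
  induction l generalizing φ with
  | nil => exact h
  | cons ψ l ih =>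
      exact ⟨h, ih (hl ψ (by simp)) (fun χ hχ => hl χ (by simp [hχ]))⟩

lemma isNNIL_listOr {l : List Formula} (h : ∀ φ ∈ l, φ.IsNNIL) : (listOr l).IsNNIL := by
  induction l with
  | nil => trivial
  | cons φ l ih =>
      exact ⟨h φ (by simp), ih (fun ψ hψ => h ψ (by simp [hψ]))⟩

lemma varsBelow_listOr {l : List Formula} (h : ∀ φ ∈ l, φ.varsBelow n) :
    (listOr l).varsBelow n := by
  induction l with
  | nil => trivial
  | cons φ l ih =>
      exact ⟨h φ (by simp), ih (fun ψ hψ => h ψ (by simp [hψ]))⟩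

lemma isNNIL_listAnd {l : List Formula} (h : ∀ φ ∈ l, φ.IsNNIL) : (listAnd l).IsNNIL := by
  induction l with
  | nil => exact ⟨trivial, trivial⟩
  | cons φ l ih =>
      exact ⟨h φ (by simp), ih (fun ψ hψ => h ψ (by simp [hψ]))⟩

lemma varsBelow_listAnd {l : List Formula} (h : ∀ φ ∈ l, φ.varsBelow n) :
    (listAnd l).varsBelow n := by
  induction l with
  | nil => exact ⟨trivial, trivial⟩
  | cons φ l ih =>
      exact ⟨h φ (by simp), ih (fun ψ hψ => h ψ (by simp [hψ]))⟩

lemma trueVars_noImp {c : Col n} : ∀ φ ∈ trueVars c, φ.noImp := by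
  intro φ hφ
  simp only [trueVars, List.mem_map, List.mem_filter] at hφ
  obtain ⟨i, _, rfl⟩ := hφ
  trivial

lemma trueVars_varsBelow {c : Col n} : ∀ φ ∈ trueVars c, φ.varsBelow n := by
  intro φ hφ
  simp only [trueVars, List.mem_map, List.mem_filter] at hφ
  obtain ⟨i, _, rfl⟩ := hφ
  exact i.2

lemma falseVars_isNNIL {c : Col n} : ∀ φ ∈ falseVars c, φ.IsNNIL := by
  intro φ hφ
  simp only [falseVars, List.mem_map, List.mem_filter] at hφ
  obtain ⟨i, _, rfl⟩ := hφ
  trivial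

lemma falseVars_varsBelow {c : Col n} : ∀ φ ∈ falseVars c, φ.varsBelow n := by
  intro φ hφ
  simp only [falseVars, List.mem_map, List.mem_filter] at hφ
  obtain ⟨i, _, rfl⟩ := hφ
  exact i.2

lemma isNNIL_impC {L : List Formula} {d : Formula} (hL : ∀ φ ∈ L, φ.noImp)
    (hd : d.IsNNIL) : (impC L d).IsNNIL := by
  cases L with
  | nil => exact hd
  | cons φ l =>
      exact ⟨noImp_conj1 (hL φ (by simp)) (fun ψ hψ => hL ψ (by simp [hψ])), hd⟩

lemma varsBelow_impC {L : List Formula} {d : Formula} (hL : ∀ φ ∈ L, φ.varsBelow n)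
    (hd : d.varsBelow n) : (impC L d).varsBelow n := by
  cases L with
  | nil => exact hd
  | cons φ l =>
      exact ⟨varsBelow_conj1 (hL φ (by simp)) (fun ψ hψ => hL ψ (by simp [hψ])), hd⟩

lemma nbeta_isNNIL (w : CTree n) : (nbeta w).IsNNIL := by
  suffices H : ∀ (k : ℕ) (w : CTree n), sizeOf w ≤ k → (nbeta w).IsNNIL from
    H (sizeOf w) w le_rfl
  intro k
  induction k with
  | zero =>
      rintro ⟨c, ts⟩ hw
      simp only [CTree.node.sizeOf_spec] at hw
      omega
  | succ k ih =>
  rintro ⟨c, ts⟩ hw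
  rw [nbeta]
  refine isNNIL_impC trueVars_noImp (isNNIL_listOr ?_)
  intro φ hφ
  rw [List.mem_append] at hφ
  rcases hφ with hφ | hφ
  · exact falseVars_isNNIL φ hφ
  · simp only [List.mem_map, List.mem_attach, true_and] at hφ
    obtain ⟨⟨t, ht⟩, rfl⟩ := hφ
    refine ih t ?_
    have := List.sizeOf_lt_of_mem ht
    simp only [CTree.node.sizeOf_spec] at hw
    omega

lemma nbeta_varsBelow (w : CTree n) : (nbeta w).varsBelow n := by
  suffices H : ∀ (k : ℕ) (w : CTree n), sizeOf w ≤ k → (nbeta w).varsBelow n from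
    H (sizeOf w) w le_rfl
  intro k
  induction k with
  | zero =>
      rintro ⟨c, ts⟩ hw
      simp only [CTree.node.sizeOf_spec] at hw
      omega
  | succ k ih =>
  rintro ⟨c, ts⟩ hw
  rw [nbeta]
  refine varsBelow_impC trueVars_varsBelow (varsBelow_listOr ?_)
  intro φ hφ
  rw [List.mem_append] at hφ
  rcases hφ with hφ | hφ
  · exact falseVars_varsBelow φ hφ
  · simp only [List.mem_map, List.mem_attach, true_and] at hφ
    obtain ⟨⟨t, ht⟩, rfl⟩ := hφ
    refine ih t ?_
    have := List.sizeOf_lt_of_mem ht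
    simp only [CTree.node.sizeOf_spec] at hw
    omega

/-! ### satisfaction helpers -/

lemma sat_listAnd (M : KStruct) (w : M.W) (l : List Formula) :
    M.sat w (listAnd l) ↔ ∀ φ ∈ l, M.sat w φ := by
  induction l with
  | nil => simp [listAnd, Formula.top, KStruct.sat]
  | cons φ l ih => simp [listAnd, KStruct.sat, ih]

lemma sat_listOr (M : KStruct) (w : M.W) (l : List Formula) :
    M.sat w (listOr l) ↔ ∃ φ ∈ l, M.sat w φ := by
  induction l with
  | nil => simp [listOr, KStruct.sat]
  | cons φ l ih => simp [listOr, KStruct.sat, ih]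

lemma sat_conj1 (M : KStruct) (w : M.W) (φ : Formula) (l : List Formula) :
    M.sat w (conj1 φ l) ↔ M.sat w φ ∧ ∀ ψ ∈ l, M.sat w ψ := by
  induction l generalizing φ with
  | nil => simp [conj1]
  | cons ψ l ih =>
      simp [conj1, KStruct.sat, ih]
      try tauto

/-! ### persistence in the universal model -/

lemma univ_V (v : (UnivModel n).W) (i : Fin n) :
    (UnivModel n).V v i.1 = v.1.color i := by
  simp [UnivModel]

lemma univ_V_persist (u v : (UnivModel n).W) (p : ℕ) (h : (UnivModel n).R u v)
    (hp : (UnivModel n).V u p = true) : (UnivModel n).V v p = true := by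
  by_cases hn : p < n
  · obtain ⟨f, hf1, hf2⟩ := h
    have hx := hf2 (rt v.1) p
    obtain ⟨s, hs⟩ := Option.isSome_iff_exists.mp (f (rt v.1)).2
    rw [toModel_V _ hs, toModel_V_rt] at hx
    have hle := umem_colLE u.2 hs
    simp only [UnivModel, dif_pos hn] at hp ⊢
    simp only [dif_pos hn] at hx
    rw [← hx]
    exact hle _ hp
  · simp [UnivModel, dif_neg hn] at hp

lemma univ_persist (φ : Formula) (u v : (UnivModel n).W) (h : (UnivModel n).R u v)
    (hs : (UnivModel n).sat u φ) : (UnivModel n).sat v φ := by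
  induction φ generalizing u v with
  | bot => exact hs
  | var p => exact univ_V_persist u v p h hs
  | and φ ψ ihφ ihψ => exact ⟨ihφ u v h hs.1, ihψ u v h hs.2⟩
  | or φ ψ ihφ ihψ =>
      rcases hs with hs | hs
      · exact Or.inl (ihφ u v h hs)
      · exact Or.inr (ihψ u v h hs)
  | imp φ ψ ihφ ihψ =>
      intro x hx hφ
      exact hs x (mle_trans h hx) hφ

lemma sat_impC (u : (UnivModel n).W) (L : List Formula) (d : Formula) :
    (UnivModel n).sat u (impC L d) ↔
      ∀ v, (UnivModel n).R u v → (∀ φ ∈ L, (UnivModel n).sat v φ) →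
        (UnivModel n).sat v d := by
  cases L with
  | nil =>
      constructor
      · intro h v hv _
        exact univ_persist d u v hv h
      · intro h
        exact h u (mle_refl u.1) (by simp)
  | cons φ l =>
      show (∀ v, (UnivModel n).R u v → (UnivModel n).sat v (conj1 φ l) → _) ↔ _
      constructor
      · intro h v hv hL
        exact h v hv ((sat_conj1 _ _ _ _).mpr ⟨hL φ (by simp), fun ψ hψ => hL ψ (by simp [hψ])⟩)
      · intro h v hv hc
        obtain ⟨h1, h2⟩ := (sat_conj1 _ _ _ _).mp hc
        refine h v hv ?_
        intro ψ hψ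
        rcases List.mem_cons.mp hψ with rfl | hψ
        · exact h1
        · exact h2 ψ hψ

lemma sat_trueVars (v : (UnivModel n).W) (c : Col n) :
    (∀ φ ∈ trueVars c, (UnivModel n).sat v φ) ↔ ColLE c v.1.color := by
  constructor
  · intro h i hi
    have := h (Formula.var i.1) (by
      simp only [trueVars, List.mem_map, List.mem_filter]
      exact ⟨i, ⟨List.mem_finRange i, hi⟩, rfl⟩)
    rw [show (UnivModel n).sat v (Formula.var i.1) = ((UnivModel n).V v i.1 = true) from rfl,
      univ_V] at this
    exact this
  · intro h φ hφ
    simp only [trueVars, List.mem_map, List.mem_filter] at hφ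
    obtain ⟨i, ⟨_, hi⟩, rfl⟩ := hφ
    show (UnivModel n).V v i.1 = true
    rw [univ_V]
    exact h i hi

lemma sat_falseVars (v : (UnivModel n).W) (c : Col n) :
    (∃ φ ∈ falseVars c, (UnivModel n).sat v φ) ↔
      ∃ i : Fin n, c i = false ∧ v.1.color i = true := by
  constructor
  · intro ⟨φ, hφ, hsat⟩
    simp only [falseVars, List.mem_map, List.mem_filter] at hφ
    obtain ⟨i, ⟨_, hi⟩, rfl⟩ := hφ
    rw [show (UnivModel n).sat v (Formula.var i.1) = ((UnivModel n).V v i.1 = true) from rfl,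
      univ_V] at hsat
    exact ⟨i, by simpa using hi, hsat⟩
  · intro ⟨i, hi, hv⟩
    refine ⟨Formula.var i.1, ?_, ?_⟩
    · simp only [falseVars, List.mem_map, List.mem_filter]
      exact ⟨i, ⟨List.mem_finRange i, by simp [hi]⟩, rfl⟩
    · show (UnivModel n).V v i.1 = true
      rw [univ_V]; exact hv

/-! ### the main lemma -/

lemma nbeta_sat (w : CTree n) (u : (UnivModel n).W) :
    (UnivModel n).sat u (nbeta w) ↔ ¬ MLE u.1 w := by
  suffices H : ∀ (k : ℕ) (w : CTree n), sizeOf w ≤ k → ∀ (u : (UnivModel n).W),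
      (UnivModel n).sat u (nbeta w) ↔ ¬ MLE u.1 w from H (sizeOf w) w le_rfl u
  clear u w
  intro k
  induction k with
  | zero =>
      rintro ⟨c, ts⟩ hw
      simp only [CTree.node.sizeOf_spec] at hw
      omega
  | succ k ih =>
  rintro ⟨c, ts⟩ hw u
  have ihts : ∀ t ∈ ts, ∀ (u : (UnivModel n).W),
      (UnivModel n).sat u (nbeta t) ↔ ¬ MLE u.1 t := by
    intro t ht u'
    refine ih t ?_ u'
    have := List.sizeOf_lt_of_mem ht
    simp only [CTree.node.sizeOf_spec] at hw
    omega
  rw [nbeta, sat_impC]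
  constructor
  · -- sat → ¬ MLE
    intro hsat hmle
    obtain ⟨pos, s, hs, hcol, hmaps⟩ := unglue hmle
    set v : (UnivModel n).W := ⟨s, umem_subt pos u.2 hs⟩ with hv
    have hRuv : (UnivModel n).R u v := mle_of_subt hs
    have hD := hsat v hRuv ((sat_trueVars v c).mpr (by rw [hv]; intro i hi; rw [hcol]; exact hi))
    rw [sat_listOr] at hD
    obtain ⟨φ, hφ, hφsat⟩ := hD
    rw [List.mem_append] at hφ
    rcases hφ with hφ | hφ
    · obtain ⟨i, hi, hvi⟩ := (sat_falseVars v c).mp ⟨φ, hφ, hφsat⟩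
      rw [show v.1.color = c from hcol] at hvi
      rw [hi] at hvi
      exact absurd hvi (by simp)
    · simp only [List.mem_map, List.mem_attach, true_and] at hφ
      obtain ⟨⟨t, ht⟩, rfl⟩ := hφ
      exact absurd (hmaps t ht) ((ihts t ht v).mp hφsat)
  · -- ¬ MLE → sat
    intro hnm v hRuv hante
    rw [sat_listOr]
    by_contra hD
    simp only [not_exists, not_and] at hD
    have hcol : v.1.color = c := by
      funext i
      by_cases hci : c i = true
      · have := (sat_trueVars v c).mp ?_ i hci
        · rw [this, hci]
        · exact hante
      · simp only [Bool.not_eq_true] at hci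
        by_cases hvi : v.1.color i = true
        · exfalso
          obtain ⟨φ, hφ, hφs⟩ := (sat_falseVars v c).mpr ⟨i, hci, hvi⟩
          exact hD φ (List.mem_append_left _ hφ) hφs
        · simp only [Bool.not_eq_true] at hvi
          rw [hvi, hci]
    have hmaps : ∀ t ∈ ts, MLE v.1 t := by
      intro t ht
      by_contra hc'
      exact hD (nbeta t) (List.mem_append_right _ (by
        simp only [List.mem_map, List.mem_attach, true_and]
        exact ⟨⟨t, ht⟩, rfl⟩)) ((ihts t ht v).mpr hc')
    exact hnm (mle_trans hRuv (glue hcol hmaps))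

/-! ### finiteness of the universal model -/

/-- depth of a colored tree -/
def cdepth : CTree n → ℕ
  | .node _ ts => (ts.attach.map (fun x => cdepth x.1)).foldr max 0 + 1
decreasing_by
  have := List.sizeOf_lt_of_mem x.2
  simp only [CTree.node.sizeOf_spec]
  omega

lemma foldr_max_le {L : List ℕ} {K : ℕ} (h : ∀ x ∈ L, x ≤ K) : L.foldr max 0 ≤ K := by
  induction L with
  | nil => exact Nat.zero_le K
  | cons x L ih =>
      simp only [List.foldr_cons]
      exact max_le (h x (by simp)) (ih (fun y hy => h y (by simp [hy])))

lemma le_foldr_max {L : List ℕ} {x : ℕ} (h : x ∈ L) : x ≤ L.foldr max 0 := by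
  induction L with
  | nil => simp at h
  | cons y L ih =>
      rcases List.mem_cons.mp h with rfl | h
      · exact le_max_left _ _
      · exact le_trans (ih h) (le_max_right _ _)

/-- number of true coordinates of a color -/
def cardc (c : Col n) : ℕ := (Finset.univ.filter (fun i => c i = true)).card

lemma cardc_le (c : Col n) : cardc c ≤ n := by
  calc cardc c ≤ Finset.univ.card := Finset.card_filter_le _ _
  _ = n := by simp

lemma cardc_lt {c d : Col n} (h : ColLT c d) : cardc c < cardc d := by
  obtain ⟨hle, hne⟩ := h
  obtain ⟨i, hi⟩ := Function.ne_iff.mp hne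
  have hci : c i = false := by
    by_contra hc
    simp only [Bool.not_eq_false] at hc
    exact hi (by rw [hc, hle i hc])
  have hdi : d i = true := by
    rw [hci] at hi
    exact (Bool.not_eq_false _).mp (Ne.symm hi)
  refine Finset.card_lt_card ?_
  rw [Finset.ssubset_iff_of_subset (fun j hj => ?_)]
  · exact ⟨i, by simp [hdi], by simp [hci]⟩
  · simp only [Finset.mem_filter, Finset.mem_univ, true_and] at hj ⊢
    exact hle j hj

lemma cdepth_bound {t : CTree n} (h : UMem t) : cdepth t + cardc t.color ≤ n + 1 := by
  induction h with
  | single c =>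
      have hcol : cardc (CTree.node c []).color = cardc c := rfl
      rw [cdepth, hcol]
      simp only [List.attach_nil, List.map_nil, List.foldr_nil]
      have := cardc_le c
      omega
  | step c ts hne hmem hchain hincomp hcol ih =>
      have hcolr : cardc (CTree.node c ts).color = cardc c := rfl
      rw [cdepth, hcolr]
      have hK : ∀ x ∈ (ts.attach.map (fun x => cdepth x.1)), x + cardc c + 1 ≤ n + 1 := by
        intro x hx
        simp only [List.mem_map, List.mem_attach, true_and] at hx
        obtain ⟨⟨t, ht⟩, rfl⟩ := hx
        have h1 := ih t ht
        have h2 := cardc_lt (hcol t ht [] t rfl)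
        show cdepth t + cardc c + 1 ≤ n + 1
        omega
      obtain ⟨t0, ht0⟩ := List.exists_mem_of_ne_nil ts hne
      have hcn : cardc c < n := by
        have := cardc_lt (hcol t0 ht0 [] t0 rfl)
        have := cardc_le (CTree.color t0)
        omega
      have := foldr_max_le (L := ts.attach.map (fun x => cdepth x.1)) (K := n - cardc c)
        (fun x hx => by have := hK x hx; omega)
      omega

lemma cdepth_pos (t : CTree n) : 1 ≤ cdepth t := by
  obtain ⟨c, ts⟩ := t
  rw [cdepth]
  omega

open Classical in
lemma finite_layer : ∀ d : ℕ, {t : CTree n | UMem t ∧ cdepth t ≤ d}.Finite := by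
  intro d
  induction d with
  | zero =>
      convert Set.finite_empty
      ext t
      simp only [Set.mem_setOf_eq, Set.mem_empty_iff_false, iff_false, not_and, not_le]
      intro _
      exact cdepth_pos t
  | succ d ihd =>
      classical
      set S := {t : CTree n | UMem t ∧ cdepth t ≤ d} with hS
      set Φ : CTree n → Col n × Finset (CTree n) := fun t => (t.color, t.children.toFinset)
        with hΦ
      have hchild : ∀ t ∈ {t : CTree n | UMem t ∧ cdepth t ≤ d + 1}, ∀ s ∈ t.children, s ∈ S := by
        rintro ⟨c, ts⟩ ⟨ht1, ht2⟩ s hs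
        refine ⟨umem_children ht1 s hs, ?_⟩
        rw [cdepth] at ht2
        have : cdepth s ≤ (ts.attach.map (fun x => cdepth x.1)).foldr max 0 :=
          le_foldr_max (by
            simp only [List.mem_map, List.mem_attach, true_and]
            exact ⟨⟨s, hs⟩, rfl⟩)
        simp only [CTree.children] at hs ⊢
        omega
      have himg : (Φ '' {t : CTree n | UMem t ∧ cdepth t ≤ d + 1}).Finite := by
        refine Set.Finite.subset (Set.Finite.prod (Set.finite_univ)
          ((ihd.finite_subsets).preimage
            (Finset.coe_injective.injOn))) ?_
        rintro x ⟨t, ht, hEq⟩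
        rw [← hEq]
        simp only [Set.mem_prod, Set.mem_univ, true_and, Set.mem_preimage, Set.mem_setOf_eq]
        intro s hs
        simp only [hΦ, Finset.mem_coe, List.mem_toFinset] at hs
        exact hchild t ht s hs
      haveI : IsTrans (CTree n) (fun a b => CTree.code a < CTree.code b) :=
        ⟨fun a b c => Nat.lt_trans⟩
      haveI : IsAntisymm (CTree n) (fun a b => CTree.code a < CTree.code b) :=
        ⟨fun a b h1 h2 => absurd (Nat.lt_trans h1 h2) (Nat.lt_irrefl _)⟩
      have hinj : Set.InjOn Φ {t : CTree n | UMem t ∧ cdepth t ≤ d + 1} := by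
        rintro ⟨c1, ts1⟩ ⟨h1, _⟩ ⟨c2, ts2⟩ ⟨h2, _⟩ hEq
        have hc : c1 = c2 := congrArg Prod.fst hEq
        have hts : ts1.toFinset = ts2.toFinset := congrArg Prod.snd hEq
        have hch1 := umem_chain h1
        have hch2 := umem_chain h2
        have hp1 : ts1.Pairwise (fun a b => CTree.code a < CTree.code b) :=
          List.isChain_iff_pairwise.mp hch1
        have hp2 : ts2.Pairwise (fun a b => CTree.code a < CTree.code b) :=
          List.isChain_iff_pairwise.mp hch2
        have hnd1 : ts1.Nodup :=
          hp1.imp (fun h e => by subst e; exact Nat.lt_irrefl _ h)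
        have hnd2 : ts2.Nodup :=
          hp2.imp (fun h e => by subst e; exact Nat.lt_irrefl _ h)
        have hperm := List.perm_of_nodup_nodup_toFinset_eq hnd1 hnd2 hts
        have hts' : ts1 = ts2 := List.Perm.eq_of_pairwise (fun a b _ _ h1 h2 => absurd (Nat.lt_trans h1 h2) (Nat.lt_irrefl _)) hp1 hp2 hperm
        rw [hc, hts']
      exact Set.Finite.of_finite_image himg hinj

lemma univ_finite : Finite ((UnivModel n).W) := by
  have h1 : {t : CTree n | UMem t} ⊆ {t : CTree n | UMem t ∧ cdepth t ≤ n + 1} := by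
    intro t ht
    exact ⟨ht, by have := cdepth_bound ht; omega⟩
  have h2 : {t : CTree n | UMem t}.Finite := (finite_layer (n + 1)).subset h1
  exact h2.to_subtype

end NNILAux

/-- every upset of the universal model `𝒯(n)` is definable by a
NNIL-formula in the variables `p_0,…,p_{n-1}` (`𝒯(n)` is an exact model). -/
theorem univ_model_exact (n : ℕ) (U : Set (UnivModel n).W)
    (hU : ∀ a b : (UnivModel n).W, a ∈ U → (UnivModel n).R a b → b ∈ U) :
    ∃ φ : Formula, φ.IsNNIL ∧ φ.varsBelow n ∧
      ∀ u : (UnivModel n).W, ((UnivModel n).sat u φ ↔ u ∈ U) := by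
  classical
  open NNILAux in
  haveI : Finite ((UnivModel n).W) := univ_finite
  have hfin : {u : (UnivModel n).W | u ∉ U}.Finite := Set.toFinite _
  set L := hfin.toFinset.toList with hL
  have hmemL : ∀ w : (UnivModel n).W, w ∈ L ↔ w ∉ U := by
    intro w
    rw [hL, Finset.mem_toList, Set.Finite.mem_toFinset]
    rfl
  refine ⟨listAnd (L.map (fun w => nbeta w.1)), ?_, ?_, ?_⟩
  · refine isNNIL_listAnd ?_
    intro φ hφ
    simp only [List.mem_map] at hφ
    obtain ⟨w, _, rfl⟩ := hφ
    exact nbeta_isNNIL w.1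
  · refine varsBelow_listAnd ?_
    intro φ hφ
    simp only [List.mem_map] at hφ
    obtain ⟨w, _, rfl⟩ := hφ
    exact nbeta_varsBelow w.1
  · intro u
    rw [sat_listAnd]
    constructor
    · intro h
      by_contra hu
      have := h (nbeta u.1) (by
        simp only [List.mem_map]
        exact ⟨u, (hmemL u).mpr hu, rfl⟩)
      rw [nbeta_sat] at this
      exact this (mle_refl u.1)
    · intro hu φ hφ
      simp only [List.mem_map] at hφ
      obtain ⟨w, hw, rfl⟩ := hφ
      rw [nbeta_sat]
      intro hmle
      exact (hmemL w).mp hw (hU u w hu hmle)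
end

section
/- For every MR-formula φ in the variables p_1,…,p_n there exist finitely many points w_1,…,w_m of finite n-models such that in every Kripke model, φ and the conjunction β(w_1) ∧ … ∧ β(w_m) are true at exactly the same points. In particular, every MR-formula is equivalent over Kripke models to a NNIL-formula, so NNIL-formulas are (up to equivalence) exactly the formulas reflected by monotonic maps. -/
/-- `χ` is the β-formula of some point of some finite n-model -/
def IsBeta (n : ℕ) (χ : Formula) : Prop :=
  ∃ (P : KStruct) (instP : Fintype P.W), P.IsNModel n ∧
    ∃ v : P.W, χ = @beta P instP n v


/-! ## Auxiliary development for the proof -/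

attribute [local instance] Classical.propDecidable

namespace KStruct

theorem sat_listAnd {M : KStruct} {w : M.W} {l : List Formula} :
    M.sat w (listAnd l) ↔ ∀ χ ∈ l, M.sat w χ := by
  induction l with
  | nil => simp [listAnd, Formula.top, sat]
  | cons a l ih => simp [listAnd, sat, ih]

theorem sat_listOr {M : KStruct} {w : M.W} {l : List Formula} :
    M.sat w (listOr l) ↔ ∃ χ ∈ l, M.sat w χ := by
  induction l with
  | nil => simp [listOr, sat]
  | cons a l ih => simp [listOr, sat, ih]

theorem sat_mono {M : KStruct} (hM : M.IsModel) {w u : M.W} (h : M.R w u) {φ : Formula}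
    (hs : M.sat w φ) : M.sat u φ := by
  induction φ generalizing w u with
  | bot => exact hs
  | var p => exact hM.2.2.2 w u p h hs
  | and a b iha ihb => exact ⟨iha h hs.1, ihb h hs.2⟩
  | or a b iha ihb => cases hs with
    | inl hs => exact Or.inl (iha h hs)
    | inr hs => exact Or.inr (ihb h hs)
  | imp a b iha ihb => exact fun v huv hav => hs v (hM.2.1 _ _ _ h huv) hav

end KStruct

/-- truncation of a structure to the first `n` variables -/
def trunc (M : KStruct) (n : ℕ) : KStruct := ⟨M.W, M.R, fun w p => if p < n then M.V w p else false⟩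

theorem trunc_isModel {M : KStruct} (hM : M.IsModel) (n : ℕ) : (trunc M n).IsModel := by
  refine ⟨hM.1, hM.2.1, hM.2.2.1, ?_⟩
  intro w u p h hv
  simp only [trunc] at hv ⊢
  split at hv
  · simpa [*] using hM.2.2.2 w u p h hv
  · simp at hv

theorem trunc_isNModel {M : KStruct} (hM : M.IsModel) (n : ℕ) : (trunc M n).IsNModel n := by
  refine ⟨trunc_isModel hM n, fun w p hp => ?_⟩
  simp [trunc, Nat.not_lt.mpr hp]

theorem sat_trunc {M : KStruct} (n : ℕ) {φ : Formula} (hφ : φ.varsBelow n) (w : M.W) :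
    (trunc M n).sat w φ ↔ M.sat w φ := by
  induction φ generalizing w with
  | bot => exact Iff.rfl
  | var p => have hp : p < n := hφ
             simp [KStruct.sat, trunc, hp]
  | and a b iha ihb => exact and_congr (iha hφ.1 w) (ihb hφ.2 w)
  | or a b iha ihb => exact or_congr (iha hφ.1 w) (ihb hφ.2 w)
  | imp a b iha ihb =>
    exact forall_congr' fun u => imp_congr Iff.rfl (imp_congr (iha hφ.1 u) (ihb hφ.2 u))

/-- p-morphisms preserve satisfaction in both directions -/
theorem pmorph_sat {N P : KStruct} {f : N.W → P.W}
    (hf : PMorphism N P f) (φ : Formula) (w : N.W) :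
    N.sat w φ ↔ P.sat (f w) φ := by
  induction φ generalizing w with
  | bot => exact Iff.rfl
  | var p => simp [KStruct.sat, hf.1.2]
  | and a b iha ihb => exact and_congr (iha w) (ihb w)
  | or a b iha ihb => exact or_congr (iha w) (ihb w)
  | imp a b iha ihb =>
    constructor
    · intro h u' hu' ha
      obtain ⟨u, hwu, rfl⟩ := hf.2 w u' hu'
      exact (ihb u).mp (h u hwu ((iha u).mpr ha))
    · intro h u hwu ha
      exact (ihb u).mpr (h (f u) (hf.1.1 _ _ hwu) ((iha u).mp ha))
noncomputable section SimSec

open Finset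

/-- the set of points properly above `q` -/
noncomputable def above (P : KStruct) [Fintype P.W] (q : P.W) : Finset P.W :=
  Finset.univ.filter (fun r => P.R q r ∧ q ≠ r)

theorem above_lt {P : KStruct} [Fintype P.W] (hP : P.IsModel) {q q' : P.W}
    (h1 : P.R q q') (h2 : q ≠ q') : (above P q').card < (above P q).card := by
  apply Finset.card_lt_card
  constructor
  · intro r hr
    simp only [above, Finset.mem_filter, Finset.mem_univ, true_and] at hr ⊢
    refine ⟨hP.2.1 _ _ _ h1 hr.1, ?_⟩
    rintro rfl
    exact h2 (hP.2.2.1 _ _ h1 hr.1)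
  · intro hsub
    have : q' ∈ above P q := by
      simp [above, h1, h2]
    have := hsub this
    simp [above] at this

/-- `Sim x q` : `x` (in `M`) simulates `q` (in the finite model `P`):
same colors, and every immediate successor of `q` is simulated by some successor of `x`. -/
def Sim (M P : KStruct) [Fintype P.W] (hP : P.IsModel) (x : M.W) (q : P.W) : Prop :=
  (∀ p, M.V x p = P.V q p) ∧
    ∀ q', ImmSucc P q q' → ∃ x', M.R x x' ∧ Sim M P hP x' q'
termination_by (above P q).card
decreasing_by exact above_lt hP ‹ImmSucc P q q'›.1 ‹ImmSucc P q q'›.2.1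

theorem Sim_def {M P : KStruct} [Fintype P.W] (hP : P.IsModel) (x : M.W) (q : P.W) :
    Sim M P hP x q ↔ ((∀ p, M.V x p = P.V q p) ∧
      ∀ q', ImmSucc P q q' → ∃ x', M.R x x' ∧ Sim M P hP x' q') := by
  rw [Sim]

theorem mem_propList {P : KStruct} {n : ℕ} {q : P.W} {χ : Formula} :
    χ ∈ propList P n q ↔ ∃ p, p < n ∧ P.V q p = true ∧ χ = Formula.var p := by
  simp only [propList, List.mem_map, List.mem_filter, List.mem_range]
  constructor
  · rintro ⟨p, ⟨hp, hv⟩, rfl⟩; exact ⟨p, hp, by simpa using hv, rfl⟩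
  · rintro ⟨p, hp, hv, rfl⟩; exact ⟨p, ⟨hp, by simpa using hv⟩, rfl⟩

theorem mem_notpropList {P : KStruct} {n : ℕ} {q : P.W} {χ : Formula} :
    χ ∈ notpropList P n q ↔ ∃ p, p < n ∧ P.V q p = false ∧ χ = Formula.var p := by
  simp only [notpropList, List.mem_map, List.mem_filter, List.mem_range]
  constructor
  · rintro ⟨p, ⟨hp, hv⟩, rfl⟩
    refine ⟨p, hp, ?_, rfl⟩
    simpa using hv
  · rintro ⟨p, hp, hv, rfl⟩
    exact ⟨p, ⟨hp, by simp [hv]⟩, rfl⟩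

theorem mem_immSuccList {P : KStruct} [Fintype P.W] {q q' : P.W} :
    q' ∈ immSuccList P q ↔ ImmSucc P q q' := by
  simp [immSuccList]

/-- from a refutation of β one extracts a simulation -/
theorem not_betaFuel_sim {M P : KStruct} [Fintype P.W] {n : ℕ}
    (hMt : ∀ w p, n ≤ p → M.V w p = false) (hP : P.IsNModel n) :
    ∀ k (q : P.W), (above P q).card < k → ∀ u : M.W,
      ¬ M.sat u (betaFuel P n k q) → ∃ u', M.R u u' ∧ Sim M P hP.1 u' q := by
  intro k
  induction k with
  | zero => intro q hq; omega
  | succ k ih =>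
    intro q hq u hns
    simp only [betaFuel, KStruct.sat] at hns
    push_neg at hns
    obtain ⟨u', hR, hA, hB⟩ := hns
    refine ⟨u', hR, ?_⟩
    rw [KStruct.sat_listAnd] at hA
    rw [Sim_def]
    have hnB : ∀ χ ∈ notpropList P n q ++ (immSuccList P q).map (betaFuel P n k),
        ¬ M.sat u' χ := by
      intro χ hχ hsχ
      exact hB (KStruct.sat_listOr.2 ⟨χ, hχ, hsχ⟩)
    constructor
    · intro p
      by_cases hp : p < n
      · cases hv : P.V q p with
        | true => exact hA _ (mem_propList.2 ⟨p, hp, hv, rfl⟩)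
        | false =>
          have := hnB _ (List.mem_append_left _ (mem_notpropList.2 ⟨p, hp, hv, rfl⟩))
          simp only [KStruct.sat] at this
          simpa using this
      · rw [hMt u' p (by omega), hP.2 q p (by omega)]
    · intro q' hq'
      have hc : ¬ M.sat u' (betaFuel P n k q') := by
        apply hnB
        exact List.mem_append_right _ (List.mem_map.2 ⟨q', mem_immSuccList.2 hq', rfl⟩)
      have hlt : (above P q').card < k := by
        have := above_lt hP.1 hq'.1 hq'.2.1
        omega
      obtain ⟨u'', h1, h2⟩ := ih q' hlt u' hc
      exact ⟨u'', h1, h2⟩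

/-- any "simulation-like" relation refutes β -/
theorem z_not_betaFuel {M P : KStruct} [Fintype P.W] {n : ℕ} (hM : M.IsModel)
    (Z : M.W → P.W → Prop)
    (hcol : ∀ x q, Z x q → ∀ p, M.V x p = P.V q p)
    (hstep : ∀ x q, Z x q → ∀ q', ImmSucc P q q' → ∃ x', M.R x x' ∧ Z x' q') :
    ∀ k (x : M.W) (q : P.W), Z x q → ¬ M.sat x (betaFuel P n k q) := by
  intro k
  induction k with
  | zero => intro x q _ hs; exact hs
  | succ k ih =>
    intro x q hZ hs
    simp only [betaFuel, KStruct.sat] at hs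
    have hA : M.sat x (listAnd (propList P n q)) := by
      rw [KStruct.sat_listAnd]
      intro χ hχ
      obtain ⟨p, hp, hv, rfl⟩ := mem_propList.1 hχ
      show M.V x p = true
      rw [hcol x q hZ p, hv]
    have hB := hs x (hM.1 x) hA
    rw [KStruct.sat_listOr] at hB
    obtain ⟨χ, hχ, hsχ⟩ := hB
    rcases List.mem_append.1 hχ with h | h
    · obtain ⟨p, hp, hv, rfl⟩ := mem_notpropList.1 h
      have : M.V x p = true := hsχ
      rw [hcol x q hZ p, hv] at this
      exact Bool.false_ne_true this
    · obtain ⟨q', hq', rfl⟩ := List.mem_map.1 h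
      obtain ⟨x', hxx', hZ'⟩ := hstep x q hZ q' (mem_immSuccList.1 hq')
      exact ih x' q' hZ' (KStruct.sat_mono hM hxx' hsχ)

theorem sim_not_betaFuel {M P : KStruct} [Fintype P.W] {n : ℕ} (hM : M.IsModel)
    (hP : P.IsModel) (k : ℕ) (x : M.W) (q : P.W) (h : Sim M P hP x q) :
    ¬ M.sat x (betaFuel P n k q) := by
  refine z_not_betaFuel hM (Sim M P hP) ?_ ?_ k x q h
  · intro x q hZ; exact ((Sim_def hP x q).1 hZ).1
  · intro x q hZ; exact ((Sim_def hP x q).1 hZ).2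

/-- minimal elements in finite nonempty subsets of a finite model -/
theorem exists_min {P : KStruct} [Fintype P.W] (hP : P.IsModel) :
    ∀ (S : Finset P.W), S.Nonempty → ∃ z ∈ S, ∀ v ∈ S, P.R v z → v = z := by
  suffices h : ∀ m (S : Finset P.W), S.card = m → S.Nonempty → ∃ z ∈ S, ∀ v ∈ S, P.R v z → v = z by
    intro S hS; exact h S.card S rfl hS
  intro m
  induction m using Nat.strong_induction_on with
  | _ m ih =>
  intro S hn hS
  obtain ⟨z₀, hz₀⟩ := hS
  by_cases hS' : (S.filter (fun v => P.R v z₀ ∧ v ≠ z₀)).Nonempty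
  · obtain ⟨z, hz, hmin⟩ := ih _ (by
      subst hn
      apply Finset.card_lt_card
      constructor
      · exact Finset.filter_subset _ _
      · intro hsub
        have := hsub hz₀
        simp at this) _ rfl hS'
    simp only [Finset.mem_filter] at hz
    refine ⟨z, hz.1, fun v hv hvz => ?_⟩
    have hvz₀ : P.R v z₀ := hP.2.1 _ _ _ hvz hz.2.1
    by_cases hv0 : v = z₀
    · subst hv0
      exact absurd (hP.2.2.1 _ _ hvz hz.2.1) (Ne.symm hz.2.2)
    · exact hmin v (Finset.mem_filter.2 ⟨hv, hvz₀, hv0⟩) hvz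
  · refine ⟨z₀, hz₀, fun v hv hvz => ?_⟩
    by_contra hne
    exact hS' ⟨v, Finset.mem_filter.2 ⟨hv, hvz, hne⟩⟩

/-- a simulation extends along the order of the finite model -/
theorem sim_R {M P : KStruct} [Fintype P.W] (hM : M.IsModel) (hP : P.IsModel) (q' : P.W) :
    ∀ k (q : P.W), (above P q).card < k → ∀ x, Sim M P hP x q → P.R q q' →
      ∃ x', M.R x x' ∧ Sim M P hP x' q' := by
  intro k
  induction k with
  | zero => intro q hq; omega
  | succ k ih =>
    intro q hq x hsim hR
    by_cases hqq : q = q'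
    · subst hqq; exact ⟨x, hM.1 x, hsim⟩
    · have hSne : (Finset.univ.filter (fun z => P.R q z ∧ q ≠ z ∧ P.R z q')).Nonempty :=
        ⟨q', by simp [hR, hqq, hP.1 q']⟩
      obtain ⟨z, hzmem, hzmin⟩ := exists_min hP _ hSne
      simp only [Finset.mem_filter, Finset.mem_univ, true_and] at hzmem
      have himm : ImmSucc P q z := by
        refine ⟨hzmem.1, hzmem.2.1, fun v hqv hvz => ?_⟩
        by_cases hvq : v = q
        · exact Or.inl hvq
        · right
          refine hzmin v ?_ hvz
          simp only [Finset.mem_filter, Finset.mem_univ, true_and]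
          exact ⟨hqv, fun h => hvq h.symm, hP.2.1 _ _ _ hvz hzmem.2.2⟩
      obtain ⟨x₁, hx₁, hsim₁⟩ := ((Sim_def hP x q).1 hsim).2 z himm
      have hlt : (above P z).card < k := by
        have := above_lt hP hzmem.1 hzmem.2.1
        omega
      obtain ⟨x', hx', hsim'⟩ := ih z hlt x₁ hsim₁ hzmem.2.2
      exact ⟨x', hM.2.1 _ _ _ hx₁ hx', hsim'⟩

end SimSec
theorem varsBelow_listAnd {n : ℕ} {l : List Formula}
    (h : ∀ χ ∈ l, χ.varsBelow n) : (listAnd l).varsBelow n := by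
  induction l with
  | nil => exact ⟨trivial, trivial⟩
  | cons a l ih =>
    exact ⟨h a (List.mem_cons_self), ih fun χ hχ => h χ (List.mem_cons_of_mem a hχ)⟩

theorem varsBelow_listOr {n : ℕ} {l : List Formula}
    (h : ∀ χ ∈ l, χ.varsBelow n) : (listOr l).varsBelow n := by
  induction l with
  | nil => exact trivial
  | cons a l ih =>
    exact ⟨h a (List.mem_cons_self), ih fun χ hχ => h χ (List.mem_cons_of_mem a hχ)⟩

theorem betaFuel_varsBelow {P : KStruct} [Fintype P.W] {n : ℕ} :
    ∀ k (q : P.W), (betaFuel P n k q).varsBelow n := by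
  intro k
  induction k with
  | zero => intro q; exact trivial
  | succ k ih =>
    intro q
    refine ⟨varsBelow_listAnd ?_, varsBelow_listOr ?_⟩
    · intro χ hχ
      obtain ⟨p, hp, _, rfl⟩ := mem_propList.1 hχ
      exact hp
    · intro χ hχ
      rcases List.mem_append.1 hχ with h | h
      · obtain ⟨p, hp, _, rfl⟩ := mem_notpropList.1 h
        exact hp
      · obtain ⟨q', _, rfl⟩ := List.mem_map.1 h
        exact ih q'

theorem card_above_lt {P : KStruct} [Fintype P.W] (v : P.W) :
    (above P v).card < Fintype.card P.W := by
  have hv : v ∉ above P v := by simp [above]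
  calc (above P v).card < (Finset.univ : Finset P.W).card :=
        Finset.card_lt_card
          ((Finset.ssubset_iff_of_subset (Finset.subset_univ _)).2
            ⟨v, Finset.mem_univ v, hv⟩)
    _ = Fintype.card P.W := Finset.card_univ

/-- MAIN SOUNDNESS: if `φ ∈ MR` and `φ` fails at `v` in a finite `n`-model `P`, then
`φ` implies `β(v)` at every point of every model. -/
theorem sound {n : ℕ} {φ : Formula} (hφ : MR φ) (hv : φ.varsBelow n)
    (P : KStruct) [Fintype P.W] (hPn : P.IsNModel n) (v : P.W) (hPv : ¬ P.sat v φ)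
    (M : KStruct) (hM : M.IsModel) (w : M.W) (hw : M.sat w φ) : M.sat w (beta P n v) := by
  by_contra hnb
  set M' : KStruct := trunc M n with hM'
  have hM'm : M'.IsModel := trunc_isModel hM n
  have hM't : ∀ w p, n ≤ p → M'.V w p = false := (trunc_isNModel hM n).2
  have hnb' : ¬ M'.sat w (betaFuel P n (Fintype.card P.W) v) := by
    rw [sat_trunc n (betaFuel_varsBelow _ _) w]
    exact hnb
  obtain ⟨u', hwu', hsim⟩ :=
    not_betaFuel_sim hM't hPn (Fintype.card P.W) v (card_above_lt v) w hnb'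
  -- the product model on the simulation pairs
  set N : KStruct :=
    ⟨{xq : M.W × P.W // Sim M' P hPn.1 xq.1 xq.2},
      fun a b => M.R a.1.1 b.1.1 ∧ P.R a.1.2 b.1.2,
      fun a p => P.V a.1.2 p⟩ with hN
  have hNm : N.IsModel := by
    refine ⟨fun a => ⟨hM.1 _, hPn.1.1 _⟩,
      fun a b c hab hbc => ⟨hM.2.1 _ _ _ hab.1 hbc.1, hPn.1.2.1 _ _ _ hab.2 hbc.2⟩,
      fun a b hab hba => ?_, fun a b p hab hV => ?_⟩
    · exact Subtype.ext (Prod.ext (hM.2.2.1 _ _ hab.1 hba.1) (hPn.1.2.2.1 _ _ hab.2 hba.2))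
    · exact hPn.1.2.2.2 _ _ p hab.2 hV
  have hf : Monotonic N M' (fun a => a.1.1) := by
    refine ⟨fun a b hab => hab.1, fun a p => ?_⟩
    exact ((Sim_def hPn.1 _ _).1 a.2).1 p
  have hsatw' : M'.sat w φ := (sat_trunc n hv w).2 hw
  have hsatu' : M'.sat u' φ := KStruct.sat_mono hM'm hwu' hsatw'
  have hNsat : N.sat ⟨(u', v), hsim⟩ φ := hφ N M' hNm hM'm _ hf _ hsatu'
  have hg : PMorphism N P (fun a => a.1.2) := by
    refine ⟨⟨fun a b hab => hab.2, fun a p => rfl⟩, ?_⟩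
    rintro ⟨⟨x, q⟩, hs⟩ q' hq'
    obtain ⟨x', hxx', hs'⟩ :=
      sim_R hM'm hPn.1 q' ((above P q).card + 1) q (Nat.lt_succ_self _) x hs hq'
    exact ⟨⟨(x', q'), hs'⟩, ⟨hxx', hq'⟩, rfl⟩
  exact hPv ((pmorph_sat hg φ _).1 hNsat)
/-! ### Selective filtration -/

/-- subformulas -/
def subf : Formula → List Formula
  | .bot => [.bot]
  | .var p => [.var p]
  | .and a b => .and a b :: (subf a ++ subf b)
  | .or a b => .or a b :: (subf a ++ subf b)
  | .imp a b => .imp a b :: (subf a ++ subf b)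

theorem subf_self (χ : Formula) : χ ∈ subf χ := by
  cases χ <;> simp [subf]

theorem subf_trans : ∀ (χ ψ : Formula), ψ ∈ subf χ → ∀ δ ∈ subf ψ, δ ∈ subf χ := by
  intro χ
  induction χ with
  | bot => intro ψ hψ; simp [subf] at hψ; subst hψ; exact fun δ h => h
  | var p => intro ψ hψ; simp [subf] at hψ; subst hψ; exact fun δ h => h
  | and a b iha ihb =>
    intro ψ hψ δ hδ
    rcases List.mem_cons.1 hψ with rfl | hψ
    · exact hδ
    · rcases List.mem_append.1 hψ with h | h
      · exact List.mem_cons_of_mem _ (List.mem_append_left _ (iha ψ h δ hδ))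
      · exact List.mem_cons_of_mem _ (List.mem_append_right _ (ihb ψ h δ hδ))
  | or a b iha ihb =>
    intro ψ hψ δ hδ
    rcases List.mem_cons.1 hψ with rfl | hψ
    · exact hδ
    · rcases List.mem_append.1 hψ with h | h
      · exact List.mem_cons_of_mem _ (List.mem_append_left _ (iha ψ h δ hδ))
      · exact List.mem_cons_of_mem _ (List.mem_append_right _ (ihb ψ h δ hδ))
  | imp a b iha ihb =>
    intro ψ hψ δ hδ
    rcases List.mem_cons.1 hψ with rfl | hψ
    · exact hδ
    · rcases List.mem_append.1 hψ with h | h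
      · exact List.mem_cons_of_mem _ (List.mem_append_left _ (iha ψ h δ hδ))
      · exact List.mem_cons_of_mem _ (List.mem_append_right _ (ihb ψ h δ hδ))

/-- the implications among the subformulas of a formula -/
def impsOf (χ : Formula) : List (Formula × Formula) :=
  (subf χ).filterMap (fun ψ => match ψ with | .imp a b => some (a, b) | _ => none)

theorem mem_impsOf {χ a b : Formula} (h : Formula.imp a b ∈ subf χ) : (a, b) ∈ impsOf χ :=
  List.mem_filterMap.2 ⟨.imp a b, h, rfl⟩

theorem impsOf_sub {χ : Formula} {ab : Formula × Formula} (h : ab ∈ impsOf χ) :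
    Formula.imp ab.1 ab.2 ∈ subf χ := by
  obtain ⟨ψ, hψ, he⟩ := List.mem_filterMap.1 h
  cases ψ with
  | imp a b =>
    simp only [Option.some.injEq] at he
    subst he
    exact hψ
  | bot => simp at he
  | var p => simp at he
  | and a b => simp at he
  | or a b => simp at he

/-- a witness for a refuted implication -/
noncomputable def wit (M : KStruct) (v : M.W) (a b : Formula) : M.W :=
  if h : ∃ v', M.R v v' ∧ M.sat v' a ∧ ¬ M.sat v' b then h.choose else v

theorem wit_spec {M : KStruct} {v : M.W} {a b : Formula} (h : ¬ M.sat v (.imp a b)) :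
    M.R v (wit M v a b) ∧ M.sat (wit M v a b) a ∧ ¬ M.sat (wit M v a b) b := by
  simp only [KStruct.sat] at h
  push_neg at h
  rw [wit, dif_pos h]
  exact h.choose_spec

/-- number of implications refuted at `v` which are not "self-witnessed" -/
noncomputable def mu (M : KStruct) (imps : List (Formula × Formula)) (v : M.W) : ℕ :=
  (imps.toFinset.filter (fun ab => ¬ M.sat v (.imp ab.1 ab.2) ∧ ¬ M.sat v ab.1)).card

theorem mu_le (M : KStruct) (imps : List (Formula × Formula)) (v : M.W) :
    mu M imps v ≤ imps.length :=
  le_trans (Finset.card_le_card (Finset.filter_subset _ _)) (imps.toFinset_card_le)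

theorem mu_lt {M : KStruct} (hM : M.IsModel) {imps : List (Formula × Formula)}
    {v : M.W} {a b : Formula} (hab : (a, b) ∈ imps)
    (h1 : ¬ M.sat v (.imp a b)) (h2 : ¬ M.sat v a) :
    mu M imps (wit M v a b) < mu M imps v := by
  obtain ⟨hR, hsa, hsb⟩ := wit_spec h1
  apply Finset.card_lt_card
  constructor
  · intro cd hcd
    simp only [Finset.mem_filter] at hcd ⊢
    refine ⟨hcd.1, fun hs => hcd.2.1 ?_, fun hs => hcd.2.2 (KStruct.sat_mono hM hR hs)⟩
    · intro u hu hcu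
      exact hs u (hM.2.1 _ _ _ hR hu) hcu
  · intro hsub
    have hmem : (a, b) ∈ imps.toFinset.filter
        (fun ab => ¬ M.sat v (.imp ab.1 ab.2) ∧ ¬ M.sat v ab.1) := by
      simp only [Finset.mem_filter, List.mem_toFinset]
      exact ⟨hab, h1, h2⟩
    have := hsub hmem
    simp only [Finset.mem_filter] at this
    exact this.2.2 hsa

/-- the selected finite set of points, as a list -/
noncomputable def grow (M : KStruct) (hM : M.IsModel) (imps : List (Formula × Formula))
    (v : M.W) : List M.W :=
  v :: ((imps.filter
      (fun ab => decide (¬ M.sat v (.imp ab.1 ab.2) ∧ ¬ M.sat v ab.1))).attach.flatMap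
    (fun x => grow M hM imps (wit M v x.1.1 x.1.2)))
termination_by mu M imps v
decreasing_by
  have hx := x.2
  rw [List.mem_filter] at hx
  have hcond := of_decide_eq_true hx.2
  exact mu_lt hM hx.1 hcond.1 hcond.2

theorem self_mem_grow {M : KStruct} (hM : M.IsModel) (imps : List (Formula × Formula))
    (v : M.W) : v ∈ grow M hM imps v := by
  rw [grow]
  exact List.mem_cons_self

theorem grow_sub {M : KStruct} (hM : M.IsModel) {imps : List (Formula × Formula)}
    {v : M.W} {a b : Formula} (hab : (a, b) ∈ imps)
    (h1 : ¬ M.sat v (.imp a b)) (h2 : ¬ M.sat v a) :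
    ∀ x ∈ grow M hM imps (wit M v a b), x ∈ grow M hM imps v := by
  intro x hx
  rw [grow]
  apply List.mem_cons_of_mem
  apply List.mem_flatMap.2
  refine ⟨⟨(a, b), ?_⟩, List.mem_attach _ _, hx⟩
  exact List.mem_filter.2 ⟨hab, decide_eq_true ⟨h1, h2⟩⟩

/-- every refuted implication of every selected point has a witness among the selected points -/
theorem grow_wit {M : KStruct} (hM : M.IsModel) {imps : List (Formula × Formula)} :
    ∀ m (v : M.W), mu M imps v < m → ∀ x ∈ grow M hM imps v, ∀ a b, (a, b) ∈ imps →
      ¬ M.sat x (.imp a b) →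
      ∃ y ∈ grow M hM imps v, M.R x y ∧ M.sat y a ∧ ¬ M.sat y b := by
  intro m
  induction m with
  | zero => intro v hv; omega
  | succ m ih =>
    intro v hv x hx a b hab hnab
    rw [grow] at hx
    rcases List.mem_cons.1 hx with rfl | hx
    · -- x = v
      by_cases hsa : M.sat x a
      · refine ⟨x, self_mem_grow hM imps x, hM.1 x, hsa, fun hsb => hnab ?_⟩
        intro u hu _
        exact KStruct.sat_mono hM hu hsb
      · obtain ⟨hR, h2, h3⟩ := wit_spec hnab
        exact ⟨wit M x a b,
          grow_sub hM hab hnab hsa _ (self_mem_grow hM imps _), hR, h2, h3⟩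
    · obtain ⟨⟨⟨c, d⟩, hcd⟩, _, hx'⟩ := List.mem_flatMap.1 hx
      rw [List.mem_filter] at hcd
      have hcond := of_decide_eq_true hcd.2
      have hlt : mu M imps (wit M v c d) < m := by
        have := mu_lt hM hcd.1 hcond.1 hcond.2
        omega
      obtain ⟨y, hy, hxy, hya, hyb⟩ := ih (wit M v c d) hlt x hx' a b hab hnab
      exact ⟨y, grow_sub hM hcd.1 hcond.1 hcond.2 y hy, hxy, hya, hyb⟩

/-- numeric bound on the size of the selection -/
def bndN (L : ℕ) : ℕ → ℕ
  | 0 => 1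
  | m + 1 => 1 + L * bndN L m

theorem grow_length_le {M : KStruct} (hM : M.IsModel) {imps : List (Formula × Formula)} :
    ∀ m (v : M.W), mu M imps v < m → (grow M hM imps v).length ≤ bndN imps.length m := by
  intro m
  induction m with
  | zero => intro v hv; omega
  | succ m ih =>
    intro v hv
    rw [grow]
    simp only [List.length_cons, bndN]
    have hbound : ((imps.filter
        (fun ab => decide (¬ M.sat v (.imp ab.1 ab.2) ∧ ¬ M.sat v ab.1))).attach.flatMap
        (fun x => grow M hM imps (wit M v x.1.1 x.1.2))).length ≤
        imps.length * bndN imps.length m := by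
      rw [List.length_flatMap]
      calc ((imps.filter _).attach.map fun x =>
            (grow M hM imps (wit M v x.1.1 x.1.2)).length).sum
          ≤ ((imps.filter (fun ab => decide (¬ M.sat v (.imp ab.1 ab.2) ∧
              ¬ M.sat v ab.1))).attach.map fun _ => bndN imps.length m).sum := by
            apply List.sum_le_sum
            rintro x hx
            obtain ⟨⟨c, d⟩, hcd⟩ := x
            rw [List.mem_filter] at hcd
            have hcond := of_decide_eq_true hcd.2
            apply ih
            show mu M imps (wit M v c d) < m
            have := mu_lt hM hcd.1 hcond.1 hcond.2
            omega
        _ = (imps.filter _).attach.length * bndN imps.length m := by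
            rw [List.map_const', List.sum_replicate, smul_eq_mul]
        _ ≤ imps.length * bndN imps.length m := by
            apply Nat.mul_le_mul_right
            rw [List.length_attach]
            exact List.length_filter_le _ _
    omega
theorem restrict_isModel {M : KStruct} (hM : M.IsModel) (S : Set M.W) :
    (M.restrict S).IsModel := by
  refine ⟨fun a => hM.1 a.1, fun a b c hab hbc => hM.2.1 _ _ _ hab hbc,
    fun a b hab hba => Subtype.ext (hM.2.2.1 _ _ hab hba),
    fun a b p hab hV => hM.2.2.2 _ _ p hab hV⟩

theorem restrict_isNModel {M : KStruct} {n : ℕ} (hM : M.IsNModel n) (S : Set M.W) :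
    (M.restrict S).IsNModel n :=
  ⟨restrict_isModel hM.1 S, fun a p hp => hM.2 a.1 p hp⟩

/-- truth lemma for the selective filtration -/
theorem filtration_truth {M : KStruct} (hM : M.IsModel) (φ0 : Formula) (v₀ : M.W) :
    ∀ ψ, ψ ∈ subf φ0 → ∀ (x : M.W) (hx : x ∈ {y | y ∈ grow M hM (impsOf φ0) v₀}),
      ((M.restrict {y | y ∈ grow M hM (impsOf φ0) v₀}).sat ⟨x, hx⟩ ψ ↔ M.sat x ψ) := by
  intro ψ
  induction ψ with
  | bot => exact fun _ _ _ => Iff.rfl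
  | var p => exact fun _ _ _ => Iff.rfl
  | and a b iha ihb =>
    intro hψ x hx
    have ha := subf_trans φ0 _ hψ a
      (List.mem_cons_of_mem _ (List.mem_append_left _ (subf_self a)))
    have hb := subf_trans φ0 _ hψ b
      (List.mem_cons_of_mem _ (List.mem_append_right _ (subf_self b)))
    exact and_congr (iha ha x hx) (ihb hb x hx)
  | or a b iha ihb =>
    intro hψ x hx
    have ha := subf_trans φ0 _ hψ a
      (List.mem_cons_of_mem _ (List.mem_append_left _ (subf_self a)))
    have hb := subf_trans φ0 _ hψ b
      (List.mem_cons_of_mem _ (List.mem_append_right _ (subf_self b)))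
    exact or_congr (iha ha x hx) (ihb hb x hx)
  | imp a b iha ihb =>
    intro hψ x hx
    have ha := subf_trans φ0 _ hψ a
      (List.mem_cons_of_mem _ (List.mem_append_left _ (subf_self a)))
    have hb := subf_trans φ0 _ hψ b
      (List.mem_cons_of_mem _ (List.mem_append_right _ (subf_self b)))
    constructor
    · intro hr
      by_contra hnab
      obtain ⟨y, hy, hxy, hya, hyb⟩ := grow_wit hM (mu M (impsOf φ0) v₀ + 1) v₀
        (Nat.lt_succ_self _) x hx a b (mem_impsOf hψ) hnab
      have hrb : (M.restrict {y | y ∈ grow M hM (impsOf φ0) v₀}).sat ⟨y, hy⟩ b :=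
        hr ⟨y, hy⟩ hxy ((iha ha y hy).2 hya)
      exact hyb ((ihb hb y hy).1 hrb)
    · intro hs u hRu hra
      exact (ihb hb u.1 u.2).2 (hs u.1 hRu ((iha ha u.1 u.2).1 hra))
/-! ### Enumeration of the finite models on `Fin m` -/

/-- the Kripke structure on `Fin m` encoded by Boolean data -/
abbrev KS (m n : ℕ) (D : (Fin m → Fin m → Bool) × (Fin m → Fin n → Bool)) : KStruct :=
  ⟨Fin m, fun i j => D.1 i j = true, fun i p => if h : p < n then D.2 i ⟨p, h⟩ else false⟩

noncomputable def dataList (m n : ℕ) :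
    List ((Fin m → Fin m → Bool) × (Fin m → Fin n → Bool)) :=
  Finset.univ.toList

/-- the list of candidate β-formulas for `φ` -/
noncomputable def betaList (n : ℕ) (φ : Formula) : List Formula :=
  (List.range (bndN (impsOf φ).length ((impsOf φ).length + 1) + 1)).flatMap fun m =>
    (dataList m n).flatMap fun D =>
      (List.finRange m).filterMap fun j =>
        if (KS m n D).IsNModel n ∧ ¬ (KS m n D).sat j φ then some (beta (KS m n D) n j)
        else none

theorem mem_betaList {n : ℕ} {φ χ : Formula} (h : χ ∈ betaList n φ) :
    ∃ (m : ℕ) (D : (Fin m → Fin m → Bool) × (Fin m → Fin n → Bool)) (j : Fin m), (KS m n D).IsNModel n ∧ ¬ (KS m n D).sat j φ ∧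
      χ = beta (KS m n D) n j := by
  obtain ⟨m, _, h⟩ := List.mem_flatMap.1 h
  obtain ⟨D, _, h⟩ := List.mem_flatMap.1 h
  obtain ⟨j, _, hj⟩ := List.mem_filterMap.1 h
  by_cases hc : (KS m n D).IsNModel n ∧ ¬ (KS m n D).sat j φ
  · rw [if_pos hc] at hj
    exact ⟨m, D, j, hc.1, hc.2, (Option.some_inj.1 hj).symm⟩
  · rw [if_neg hc] at hj
    simp at hj

theorem betaList_intro {n : ℕ} {φ : Formula} {m : ℕ} {D} {j : Fin m}
    (hm : m ≤ bndN (impsOf φ).length ((impsOf φ).length + 1))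
    (h1 : (KS m n D).IsNModel n) (h2 : ¬ (KS m n D).sat j φ) :
    beta (KS m n D) n j ∈ betaList n φ := by
  apply List.mem_flatMap.2
  refine ⟨m, List.mem_range.2 (by omega), ?_⟩
  apply List.mem_flatMap.2
  refine ⟨D, by simp [dataList], ?_⟩
  apply List.mem_filterMap.2
  exact ⟨j, List.mem_finRange j, if_pos ⟨h1, h2⟩⟩

/-- MAIN COMPLETENESS: at any point of any model where `φ` fails,
some candidate β-formula fails as well. -/
theorem complete {n : ℕ} {φ : Formula} (hv : φ.varsBelow n)
    (M : KStruct) (hM : M.IsModel) (w : M.W) (hns : ¬ M.sat w φ) :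
    ∃ χ ∈ betaList n φ, ¬ M.sat w χ := by
  set M' : KStruct := trunc M n with hM'def
  have hM'm : M'.IsModel := trunc_isModel hM n
  have hM'n : M'.IsNModel n := trunc_isNModel hM n
  have hns' : ¬ M'.sat w φ := fun h => hns ((sat_trunc n hv w).1 h)
  set G : List M'.W := grow M' hM'm (impsOf φ) w with hGdef
  set S : Set M'.W := {y | y ∈ G} with hSdef
  set P₁ : KStruct := M'.restrict S with hP₁def
  letI instS : Fintype P₁.W :=
    (Fintype.ofFinset G.toFinset (fun x => by simp [hSdef, List.mem_toFinset]) : Fintype ↥S)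
  have hP₁m : P₁.IsModel := restrict_isModel hM'm S
  have hP₁n : P₁.IsNModel n := restrict_isNModel hM'n S
  have hw₀ : w ∈ S := self_mem_grow hM'm (impsOf φ) w
  have hP₁φ : ¬ P₁.sat ⟨w, hw₀⟩ φ := by
    intro h
    exact hns' ((filtration_truth hM'm φ w φ (subf_self φ) w hw₀).1 h)
  set m := Fintype.card P₁.W with hmdef
  set e : P₁.W ≃ Fin m := Fintype.equivFin P₁.W with hedef
  set D : (Fin m → Fin m → Bool) × (Fin m → Fin n → Bool) :=
    (fun i j => decide (P₁.R (e.symm i) (e.symm j)), fun i p => P₁.V (e.symm i) p.1)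
    with hDdef
  set Q : KStruct := KS m n D with hQdef
  have hQR : ∀ i j, Q.R i j ↔ P₁.R (e.symm i) (e.symm j) := by
    intro i j
    exact decide_eq_true_iff
  have hQV : ∀ i p, Q.V i p = M'.V (e.symm i).1 p := by
    intro i p
    by_cases hp : p < n
    · show (if h : p < n then D.2 i ⟨p, h⟩ else false) = _; rw [dif_pos hp]
      rfl
    · have h1 : Q.V i p = false := by show (if h : p < n then D.2 i ⟨p, h⟩ else false) = false; rw [dif_neg hp]
      have h2 : M'.V (e.symm i).1 p = false := hM'n.2 _ p (by omega)
      rw [h1, h2]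
  have hQm : Q.IsModel := by
    refine ⟨fun i => (hQR i i).2 (hP₁m.1 _),
      fun i j k hij hjk => (hQR i k).2 (hP₁m.2.1 _ _ _ ((hQR i j).1 hij) ((hQR j k).1 hjk)),
      fun i j hij hji => ?_, fun i j p hij hV => ?_⟩
    · have := hP₁m.2.2.1 _ _ ((hQR i j).1 hij) ((hQR j i).1 hji)
      have := congrArg e this
      simpa using this
    · rw [hQV i p] at hV
      rw [hQV j p]
      exact hM'm.2.2.2 _ _ p ((hQR i j).1 hij) hV
  have hQn : Q.IsNModel n := by
    refine ⟨hQm, fun i p hp => ?_⟩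
    show (if h : p < n then D.2 i ⟨p, h⟩ else false) = false; rw [dif_neg (by omega)]
  have hQpm : PMorphism Q P₁ (fun i => e.symm i) := by
    refine ⟨⟨fun i j hij => (hQR i j).1 hij, fun i p => (hQV i p).symm⟩, ?_⟩
    intro i y hy
    refine ⟨e y, (hQR i (e y)).2 (by simpa using hy), by simp⟩
  have hQφ : ¬ Q.sat (e ⟨w, hw₀⟩) φ := by
    intro h
    have := (pmorph_sat hQpm φ (e ⟨w, hw₀⟩)).1 h
    exact hP₁φ (cast (congrArg (fun z => P₁.sat z φ) (e.symm_apply_apply ⟨w, hw₀⟩)) this)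
  -- the candidate formula
  refine ⟨beta Q n (e ⟨w, hw₀⟩), ?_, ?_⟩
  · apply betaList_intro ?_ hQn hQφ
    have hcard : m = G.toFinset.card := by
      rw [hmdef]
      exact Fintype.card_ofFinset _ _
    have hlen : G.length ≤ bndN (impsOf φ).length ((impsOf φ).length + 1) := by
      apply grow_length_le hM'm
      have := mu_le M' (impsOf φ) w
      omega
    calc m = G.toFinset.card := hcard
      _ ≤ G.length := G.toFinset_card_le
      _ ≤ _ := hlen
  · -- the candidate β fails at `w`
    intro hsat
    have hsat' : M'.sat w (beta Q n (e ⟨w, hw₀⟩)) :=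
      (sat_trunc n (betaFuel_varsBelow _ _) w).2 hsat
    have hcol : ∀ (x : M'.W) (i : Q.W), (∃ hx : x ∈ S, e ⟨x, hx⟩ = i) →
        ∀ p, M'.V x p = Q.V i p := by
      rintro x i ⟨hx, rfl⟩ p
      rw [hQV]
      exact congrArg (fun z : P₁.W => M'.V z.1 p) (e.symm_apply_apply ⟨x, hx⟩).symm
    have hstep : ∀ (x : M'.W) (i : Q.W), (∃ hx : x ∈ S, e ⟨x, hx⟩ = i) →
        ∀ j, ImmSucc Q i j → ∃ x', M'.R x x' ∧ ∃ hx' : x' ∈ S, e ⟨x', hx'⟩ = j := by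
      rintro x i ⟨hx, rfl⟩ j hj
      have hR : P₁.R (e.symm (e ⟨x, hx⟩)) (e.symm j) := (hQR _ j).1 hj.1
      replace hR : P₁.R ⟨x, hx⟩ (e.symm j) := cast (congrArg (fun z => P₁.R z (e.symm j)) (e.symm_apply_apply ⟨x, hx⟩)) hR
      exact ⟨(e.symm j).1, hR, (e.symm j).2, e.apply_symm_apply j⟩
    exact z_not_betaFuel (n := n) hM'm _ hcol hstep
      (Fintype.card Q.W) w (e ⟨w, hw₀⟩) ⟨hw₀, rfl⟩ hsat'
/-! ### Removing `⊤` to obtain genuine NNIL formulas -/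

/-- simplify away trivially-true antecedents and conjuncts -/
def dtop : Formula → Formula
  | .and a b =>
      if dtop a = .top then dtop b
      else if dtop b = .top then dtop a
      else .and (dtop a) (dtop b)
  | .or a b => .or (dtop a) (dtop b)
  | .imp a b => if dtop a = .top then dtop b else .imp (dtop a) (dtop b)
  | .bot => .bot
  | .var p => .var p

theorem sat_top {M : KStruct} (w : M.W) : M.sat w Formula.top := by
  intro u _ h
  exact h

theorem sat_dtop {M : KStruct} (hM : M.IsModel) (χ : Formula) :
    ∀ w : M.W, M.sat w (dtop χ) ↔ M.sat w χ := by
  induction χ with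
  | bot => exact fun _ => Iff.rfl
  | var p => exact fun _ => Iff.rfl
  | and a b iha ihb =>
    intro w
    rw [dtop]
    split
    · rename_i h
      show M.sat w (dtop b) ↔ M.sat w a ∧ M.sat w b
      rw [ihb w]
      have ha : M.sat w a := (iha w).1 (h ▸ sat_top w)
      exact ⟨fun hb => ⟨ha, hb⟩, And.right⟩
    · split
      · rename_i h
        show M.sat w (dtop a) ↔ M.sat w a ∧ M.sat w b
        rw [iha w]
        have hb : M.sat w b := (ihb w).1 (h ▸ sat_top w)
        exact ⟨fun ha => ⟨ha, hb⟩, And.left⟩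
      · exact and_congr (iha w) (ihb w)
  | or a b iha ihb => exact fun w => or_congr (iha w) (ihb w)
  | imp a b iha ihb =>
    intro w
    rw [dtop]
    split
    · rename_i h
      show M.sat w (dtop b) ↔ M.sat w (.imp a b)
      rw [ihb w]
      constructor
      · intro hb u hu _
        exact KStruct.sat_mono hM hu hb
      · intro hs
        exact hs w (hM.1 w) ((iha w).1 (h ▸ sat_top w))
    · show M.sat w (.imp (dtop a) (dtop b)) ↔ M.sat w (.imp a b)
      constructor
      · intro hs u hu ha
        exact (ihb u).1 (hs u hu ((iha u).2 ha))
      · intro hs u hu ha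
        exact (ihb u).2 (hs u hu ((iha u).1 ha))

theorem dtop_listAnd_vars {l : List Formula} (h : ∀ χ ∈ l, ∃ p, χ = Formula.var p) :
    dtop (listAnd l) = Formula.top ∨ Formula.noImp (dtop (listAnd l)) := by
  induction l with
  | nil => exact Or.inl rfl
  | cons a l ih =>
    obtain ⟨p, rfl⟩ := h a (List.mem_cons_self)
    have hvar : dtop (Formula.var p) = Formula.var p := rfl
    have hne : dtop (Formula.var p) ≠ Formula.top := by simp [hvar, Formula.top]
    have hstep : dtop (listAnd (Formula.var p :: l)) =
        if dtop (listAnd l) = Formula.top then dtop (Formula.var p)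
        else Formula.and (dtop (Formula.var p)) (dtop (listAnd l)) := by
      show dtop (Formula.and (Formula.var p) (listAnd l)) = _
      rw [dtop, if_neg hne]
    rw [hstep]
    rcases ih (fun χ hχ => h χ (List.mem_cons_of_mem _ hχ)) with htop | hni
    · rw [if_pos htop]
      right
      trivial
    · have hne2 : dtop (listAnd l) ≠ Formula.top := by
        intro hc
        rw [hc] at hni
        exact hni
      rw [if_neg hne2]
      right
      exact ⟨trivial, hni⟩

theorem isNNIL_top : Formula.IsNNIL Formula.top := ⟨trivial, trivial⟩

theorem dtop_listOr_NNIL {l : List Formula} (h : ∀ χ ∈ l, (dtop χ).IsNNIL) :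
    (dtop (listOr l)).IsNNIL := by
  induction l with
  | nil => trivial
  | cons a l ih =>
    exact ⟨h a (List.mem_cons_self), ih fun χ hχ => h χ (List.mem_cons_of_mem _ hχ)⟩

theorem dtop_listAnd_NNIL {l : List Formula} (h : ∀ χ ∈ l, (dtop χ).IsNNIL) :
    (dtop (listAnd l)).IsNNIL := by
  induction l with
  | nil => exact isNNIL_top
  | cons a l ih =>
    have ha := h a (List.mem_cons_self)
    have hl := ih fun χ hχ => h χ (List.mem_cons_of_mem _ hχ)
    show Formula.IsNNIL (if dtop a = Formula.top then dtop (listAnd l)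
      else if dtop (listAnd l) = Formula.top then dtop a
      else .and (dtop a) (dtop (listAnd l)))
    split
    · exact hl
    · split
      · exact ha
      · exact ⟨ha, hl⟩

theorem dtop_betaFuel_NNIL {P : KStruct} [Fintype P.W] {n : ℕ} :
    ∀ k (q : P.W), (dtop (betaFuel P n k q)).IsNNIL := by
  intro k
  induction k with
  | zero => intro q; trivial
  | succ k ih =>
    intro q
    show Formula.IsNNIL (if dtop (listAnd (propList P n q)) = Formula.top
      then dtop (listOr _) else .imp (dtop (listAnd (propList P n q))) (dtop (listOr _)))
    have hB : (dtop (listOr (notpropList P n q ++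
        (immSuccList P q).map (betaFuel P n k)))).IsNNIL := by
      apply dtop_listOr_NNIL
      intro χ hχ
      rcases List.mem_append.1 hχ with hh | hh
      · obtain ⟨p, _, _, rfl⟩ := mem_notpropList.1 hh
        trivial
      · obtain ⟨q', _, rfl⟩ := List.mem_map.1 hh
        exact ih q'
    split
    · exact hB
    · rename_i hne
      have := dtop_listAnd_vars (l := propList P n q) ?_
      · rcases this with htop | hni
        · exact absurd htop hne
        · exact ⟨hni, hB⟩
      · intro χ hχ
        obtain ⟨p, _, _, rfl⟩ := mem_propList.1 hχ
        exact ⟨p, rfl⟩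
/-- every MR-formula in `n` variables is equivalent over Kripke models to
a finite conjunction of β-formulas of points of finite n-models; in particular it is
equivalent to a NNIL-formula. -/
theorem mr_formula_is_conjunction_of_betas (n : ℕ) (φ : Formula) (hφ : MR φ)
    (hv : φ.varsBelow n) :
    ∃ l : List Formula, (∀ χ ∈ l, IsBeta n χ) ∧
      (∀ (M : KStruct), M.IsModel → ∀ w : M.W, (M.sat w φ ↔ M.sat w (listAnd l))) ∧
      ∃ ψ : Formula, ψ.IsNNIL ∧
        ∀ (M : KStruct), M.IsModel → ∀ w : M.W, (M.sat w φ ↔ M.sat w ψ) := by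
  have heq : ∀ (M : KStruct), M.IsModel → ∀ w : M.W,
      (M.sat w φ ↔ M.sat w (listAnd (betaList n φ))) := by
    intro M hM w
    constructor
    · intro hs
      rw [KStruct.sat_listAnd]
      intro χ hχ
      obtain ⟨m, D, j, h1, h2, rfl⟩ := mem_betaList hχ
      exact sound hφ hv (KS m n D) h1 j h2 M hM w hs
    · intro hs
      by_contra hns
      obtain ⟨χ, hχ, hnχ⟩ := complete hv M hM w hns
      exact hnχ (KStruct.sat_listAnd.1 hs χ hχ)
  refine ⟨betaList n φ, ?_, heq, dtop (listAnd (betaList n φ)), ?_, ?_⟩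
  · intro χ hχ
    obtain ⟨m, D, j, h1, h2, rfl⟩ := mem_betaList hχ
    exact ⟨KS m n D, inferInstance, h1, j, rfl⟩
  · apply dtop_listAnd_NNIL
    intro χ hχ
    obtain ⟨m, D, j, h1, h2, rfl⟩ := mem_betaList hχ
    exact dtop_betaFuel_NNIL (P := KS m n D) (n := n) (Fintype.card (KS m n D).W) j
  · intro M hM w
    rw [sat_dtop hM]
    exact heq M hM w
end

section
/- Every tree-like n-model M has a tree-like color-preserving submodel N with the same root such that N has finite depth; in fact, along every chain of distinct points of N the colors strictly increase, so every such chain has length at most n+1. -/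
/-- a finite nonempty set linearly ordered by a reflexive transitive relation
has a least element -/
lemma fin_chain_min {α : Type} (R : α → α → Prop)
    (htrans : ∀ a b c, R a b → R b c → R a c)
    (s : Finset α) (hne : s.Nonempty)
    (hrefl : ∀ a ∈ s, R a a)
    (hlin : ∀ a ∈ s, ∀ b ∈ s, R a b ∨ R b a) :
    ∃ v ∈ s, ∀ t ∈ s, R v t := by
  classical
  induction s using Finset.induction with
  | empty => exact absurd hne (by simp)
  | insert a s ha ih =>
    rcases s.eq_empty_or_nonempty with rfl | hs
    · refine ⟨a, by simp, ?_⟩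
      intro t ht
      simp only [Finset.mem_insert, Finset.notMem_empty, or_false] at ht
      subst ht
      exact hrefl _ (Finset.mem_insert_self _ _)
    · obtain ⟨v, hv, hvmin⟩ := ih hs (fun x hx => hrefl x (by simp [hx]))
        (fun x hx y hy => hlin x (by simp [hx]) y (by simp [hy]))
      rcases hlin a (by simp) v (by simp [hv]) with h | h
      · refine ⟨a, by simp, ?_⟩
        intro t ht
        rcases Finset.mem_insert.mp ht with rfl | ht
        · exact hrefl t (by simp)
        · exact htrans _ _ _ h (hvmin t ht)
      · refine ⟨v, by simp [hv], ?_⟩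
        intro t ht
        rcases Finset.mem_insert.mp ht with rfl | ht
        · exact h
        · exact hvmin t ht

/-- every tree-like n-model has a tree-like color-preserving submodel
with the same root in which colors strictly increase along chains of distinct points,
so every such chain has length at most `n+1` (finite depth). -/
theorem tree_has_finite_depth_color_preserving_submodel (n : ℕ) (M : KStruct)
    (hM : M.IsNModel n) (r : M.W) (htree : IsTree M r) :
    ∃ S : Set M.W, ∃ hr : r ∈ S,
      IsTree (M.restrict S) ⟨r, hr⟩ ∧ ColorPresSub M S ∧
      (∀ w u : M.W, w ∈ S → u ∈ S → M.R w u → w ≠ u →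
        ((∀ p, M.V w p = true → M.V u p = true) ∧ ∃ p, M.V w p ≠ M.V u p)) ∧
      (∀ l : List M.W, (∀ w ∈ l, w ∈ S) →
        List.Chain' (fun a b => M.R a b ∧ a ≠ b) l → l.length ≤ n + 1) := by
  classical
  obtain ⟨⟨hrefl, htrans, hanti, hpers⟩, hvar⟩ := hM
  obtain ⟨hroot, hfin, hlin⟩ := htree
  set S : Set M.W := { w | ∀ u, M.R u w → (∀ p, M.V u p = M.V w p) → u = w } with hSdef
  have hrS : r ∈ S := fun u hu _ => hanti u r hu (hroot u)
  -- strict increase of colors along S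
  have hstrict : ∀ w u : M.W, w ∈ S → u ∈ S → M.R w u → w ≠ u →
      ((∀ p, M.V w p = true → M.V u p = true) ∧ ∃ p, M.V w p ≠ M.V u p) := by
    intro w u hwS huS hwu hne
    refine ⟨fun p hp => hpers w u p hwu hp, ?_⟩
    by_contra hcon
    push_neg at hcon
    exact hne (huS w hwu hcon)
  refine ⟨S, hrS, ?_, ?_, hstrict, ?_⟩
  · -- tree-like
    refine ⟨fun w => hroot w.1, ?_, fun w u v hu hv => hlin w.1 u.1 v.1 hu hv⟩
    intro w
    have : {u : (M.restrict S).W | (M.restrict S).R u w} =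
        (Subtype.val) ⁻¹' {u : M.W | M.R u w.1} := rfl
    rw [this]
    exact (hfin w.1).preimage (Subtype.val_injective.injOn)
  · -- color preserving
    intro w hw u hwu
    set T : Set M.W := {v | M.R w v ∧ M.R v u ∧ ∀ p, M.V v p = M.V u p} with hTdef
    have hTfin : T.Finite := (hfin u).subset (fun v hv => hv.2.1)
    have huT : u ∈ T := ⟨hwu, hrefl u, fun _ => rfl⟩
    obtain ⟨v, hvmem, hvmin⟩ := fin_chain_min M.R htrans hTfin.toFinset
      ⟨u, hTfin.mem_toFinset.mpr huT⟩
      (fun a _ => hrefl a)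
      (fun a ha b hb => hlin u a b (hTfin.mem_toFinset.mp ha).2.1
        (hTfin.mem_toFinset.mp hb).2.1)
    rw [hTfin.mem_toFinset] at hvmem
    obtain ⟨hwv, hvu, hvcol⟩ := hvmem
    have hvminT : ∀ t ∈ T, M.R v t := fun t ht => hvmin t (hTfin.mem_toFinset.mpr ht)
    refine ⟨v, ?_, hwv, hvcol⟩
    -- v ∈ S
    intro x hxv hxcol
    rcases hlin v x w hxv hwv with hxw | hwx
    case inr =>
      -- w R x : then x ∈ T, minimality forces x = v
      exact hanti x v hxv (hvminT x ⟨hwx, htrans x v u hxv hvu,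
        fun p => (hxcol p).trans (hvcol p)⟩)
    case inl =>
      -- x R w : colors of w and v coincide, so w ∈ T, hence v = w, then x = w
      have hwcol : ∀ p, M.V w p = M.V v p := by
        intro p
        cases hp : M.V w p with
        | true => exact (hpers w v p hwv hp).symm
        | false =>
          cases hq : M.V v p with
          | true =>
            have : M.V x p = true := (hxcol p).trans hq
            have := hpers x w p hxw this
            rw [hp] at this; exact absurd this (by simp)
          | false => rfl
      have hwT : w ∈ T := ⟨hrefl w, hwu, fun p => (hwcol p).trans (hvcol p)⟩
      have hvw : v = w := hanti v w (hvminT w hwT) hwv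
      subst hvw
      exact hw x hxv hxcol
  · -- chain length bound
    intro l hlS hlchain
    set f : M.W → ℕ := fun w => ((Finset.range n).filter (fun p => M.V w p = true)).card
      with hfdef
    have hfmono : ∀ w u : M.W, w ∈ S → u ∈ S → M.R w u → w ≠ u → f w < f u := by
      intro w u hwS huS hwu hne
      obtain ⟨hmon, p, hp⟩ := hstrict w u hwS huS hwu hne
      apply Finset.card_lt_card
      constructor
      · intro q hq
        simp only [Finset.mem_filter, Finset.mem_range] at hq ⊢
        exact ⟨hq.1, hmon q hq.2⟩
      · intro hsub
        have hup : M.V u p = true := by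
          cases hw : M.V w p with
          | true => exact hmon p hw
          | false =>
            cases hu : M.V u p with
            | true => rfl
            | false => rw [hw, hu] at hp; exact absurd rfl hp
        have hpn : p < n := by
          by_contra hpn
          push_neg at hpn
          rw [hvar u p hpn] at hup; exact absurd hup (by simp)
        have : p ∈ (Finset.range n).filter (fun q => M.V u q = true) := by
          simp [hpn, hup]
        have hwp := hsub this
        simp only [Finset.mem_filter, Finset.mem_range] at hwp
        rw [hwp.2] at hp
        exact hp (hup.symm)
    -- the relation is transitive
    haveI : IsTrans M.W (fun a b => M.R a b ∧ a ≠ b) := ⟨by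
      rintro a b c ⟨hab, hab'⟩ ⟨hbc, hbc'⟩
      refine ⟨htrans a b c hab hbc, ?_⟩
      rintro rfl
      exact hab' (hanti a b hab hbc)⟩
    have hpw : l.Pairwise (fun a b => M.R a b ∧ a ≠ b) :=
      List.isChain_iff_pairwise.mp hlchain
    have hpwf : (l.map f).Pairwise (· < ·) := by
      rw [List.pairwise_map]
      exact hpw.imp_of_mem (fun {a b} ha hb hab =>
        hfmono a b (hlS a ha) (hlS b hb) hab.1 hab.2)
    have hnd : (l.map f).Nodup := hpwf.imp (fun h => Nat.ne_of_lt h)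
    have hsub : (l.map f).toFinset ⊆ Finset.range (n + 1) := by
      intro x hx
      rw [List.mem_toFinset, List.mem_map] at hx
      obtain ⟨w, _, rfl⟩ := hx
      rw [Finset.mem_range, Nat.lt_succ_iff]
      calc f w ≤ (Finset.range n).card := Finset.card_filter_le _ _
        _ = n := Finset.card_range n
    calc l.length = (l.map f).length := (List.length_map _).symm
      _ = (l.map f).toFinset.card := (List.toFinset_card_of_nodup hnd).symm
      _ ≤ (Finset.range (n + 1)).card := Finset.card_le_card hsub
      _ = n + 1 := Finset.card_range _
end

section
/- Every tree-like n-model M of finite depth (i.e., there is a finite upper bound on the length of R-chains of distinct points of M) has a finite tree-like color-preserving submodel N with the same root. -/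
open Classical in
/-- auxiliary: build a finite color-preserving subset above `w` with fuel `k` -/
noncomputable def buildSet (M : KStruct) (n : ℕ) : ℕ → M.W → Set M.W
  | 0, w => {w}
  | (k+1), w => {w} ∪ ⋃ c : Fin n → Bool,
      if h : ∃ u, M.R w u ∧ w ≠ u ∧ ∀ p : Fin n, M.V u p = c p
      then buildSet M n k h.choose else ∅

lemma mem_buildSet_self (M : KStruct) (n k : ℕ) (w : M.W) : w ∈ buildSet M n k w := by
  cases k <;> simp [buildSet]

lemma buildSet_finite (M : KStruct) (n k : ℕ) (w : M.W) : (buildSet M n k w).Finite := by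
  induction k generalizing w with
  | zero => simp [buildSet]
  | succ k ih =>
      refine (Set.finite_singleton w).union (Set.finite_iUnion fun c => ?_)
      by_cases h : ∃ u, M.R w u ∧ w ≠ u ∧ ∀ p : Fin n, M.V u p = c p
      · rw [dif_pos h]; exact ih _
      · rw [dif_neg h]; exact Set.finite_empty

lemma buildSet_R (M : KStruct) (n : ℕ) (hM : M.IsModel) (k : ℕ) (w : M.W) :
    ∀ v ∈ buildSet M n k w, M.R w v := by
  induction k generalizing w with
  | zero => intro v hv; simp [buildSet] at hv; subst hv; exact hM.1 v
  | succ k ih =>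
      intro v hv
      rcases hv with hv | hv
      · simp at hv; subst hv; exact hM.1 v
      · simp only [Set.mem_iUnion] at hv
        obtain ⟨c, hv⟩ := hv
        by_cases h : ∃ u, M.R w u ∧ w ≠ u ∧ ∀ p : Fin n, M.V u p = c p
        · rw [dif_pos h] at hv
          exact hM.2.1 _ _ _ h.choose_spec.1 (ih _ _ hv)
        · rw [dif_neg h] at hv; exact absurd hv (Set.notMem_empty v)

lemma buildSet_colorPres (M : KStruct) (n : ℕ) (hM : M.IsNModel n) (k : ℕ) (w : M.W)
    (hb : ∀ l : List M.W, List.Chain' (fun a b => M.R a b ∧ a ≠ b) l →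
      l.head? = some w → l.length ≤ k + 1) :
    ∀ v ∈ buildSet M n k w, ∀ u, M.R v u →
      ∃ x ∈ buildSet M n k w, M.R v x ∧ ∀ p, M.V x p = M.V u p := by
  induction k generalizing w with
  | zero =>
      intro v hv u hu
      simp [buildSet] at hv; subst hv
      by_cases huw : u = v
      · exact ⟨v, mem_buildSet_self M n 0 v, hM.1.1 v, fun p => by rw [huw]⟩
      · exfalso
        have := hb [v, u] (by simp [List.Chain', List.isChain_cons_cons, hu, Ne.symm huw]) rfl
        simp at this
  | succ k ih =>
      intro v hv u hu
      rcases hv with hv | hv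
      · -- v = w
        simp at hv; subst hv
        by_cases huw : u = v
        · subst huw; exact ⟨u, mem_buildSet_self M n _ u, hM.1.1 u, fun _ => rfl⟩
        · set c : Fin n → Bool := fun p => M.V u p with hc
          by_cases hcw : ∀ p : Fin n, M.V v p = c p
          · refine ⟨v, mem_buildSet_self M n _ v, hM.1.1 v, fun p => ?_⟩
            by_cases hp : p < n
            · exact hcw ⟨p, hp⟩
            · rw [hM.2 v p (le_of_not_gt hp), hM.2 u p (le_of_not_gt hp)]
          · have h : ∃ x, M.R v x ∧ v ≠ x ∧ ∀ p : Fin n, M.V x p = c p :=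
              ⟨u, hu, fun e => huw e.symm, fun p => rfl⟩
            refine ⟨h.choose, ?_, h.choose_spec.1, fun p => ?_⟩
            · refine Or.inr (Set.mem_iUnion.2 ⟨c, ?_⟩)
              rw [dif_pos h]
              exact mem_buildSet_self M n k _
            · by_cases hp : p < n
              · exact h.choose_spec.2.2 ⟨p, hp⟩
              · rw [hM.2 _ p (le_of_not_gt hp), hM.2 u p (le_of_not_gt hp)]
      · simp only [Set.mem_iUnion] at hv
        obtain ⟨c, hv⟩ := hv
        by_cases h : ∃ x, M.R w x ∧ w ≠ x ∧ ∀ p : Fin n, M.V x p = c p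
        · rw [dif_pos h] at hv
          have hb' : ∀ l : List M.W, List.Chain' (fun a b => M.R a b ∧ a ≠ b) l →
              l.head? = some h.choose → l.length ≤ k + 1 := by
            intro l hl hhead
            have hchain : List.Chain' (fun a b => M.R a b ∧ a ≠ b) (w :: l) := by
              refine List.isChain_cons.2 ⟨?_, hl⟩
              intro b hb'
              rw [hhead] at hb'; simp at hb'; subst hb'
              exact ⟨h.choose_spec.1, h.choose_spec.2.1⟩
            have := hb (w :: l) hchain rfl
            simpa using this
          obtain ⟨x, hx, hvx, hcol⟩ := ih h.choose hb' v hv u hu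
          refine ⟨x, Or.inr (Set.mem_iUnion.2 ⟨c, ?_⟩), hvx, hcol⟩
          rw [dif_pos h]; exact hx
        · rw [dif_neg h] at hv; exact absurd hv (Set.notMem_empty v)

/-- every tree-like n-model of finite depth has a finite tree-like
color-preserving submodel with the same root. -/
theorem finite_depth_tree_has_finite_color_preserving_submodel (n : ℕ) (M : KStruct)
    (hM : M.IsNModel n) (r : M.W) (htree : IsTree M r)
    (hdepth : ∃ k : ℕ, ∀ l : List M.W,
      List.Chain' (fun a b => M.R a b ∧ a ≠ b) l → l.length ≤ k) :
    ∃ S : Set M.W, S.Finite ∧ ∃ hr : r ∈ S,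
      IsTree (M.restrict S) ⟨r, hr⟩ ∧ ColorPresSub M S := by
  obtain ⟨k, hk⟩ := hdepth
  refine ⟨buildSet M n k r, buildSet_finite M n k r, mem_buildSet_self M n k r, ?_, ?_⟩
  · haveI hfin : Finite (M.restrict (buildSet M n k r)).W := (buildSet_finite M n k r).to_subtype
    refine ⟨fun w => buildSet_R M n hM.1 k r w.1 w.2, fun w => Set.toFinite _,
      fun w u v hu hv => htree.2.2 w.1 u.1 v.1 hu hv⟩
  · intro w hw u hu
    exact buildSet_colorPres M n hM k r
      (fun l hl _ => (hk l hl).trans (Nat.le_succ k)) w hw u hu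
end

section
/- Every rooted n-model M with root r has a finite color-preserving submodel N with the same root r. If moreover M is tree-like, then N can be chosen so that in addition N is the image of M under a surjective monotonic map; consequently (M, r) and (N, r) satisfy the same MR-formulas, and in particular the same NNIL-formulas. -/
section Gen
variable {α : Type}

lemma exists_greatest (R : α → α → Prop) (hrefl : ∀ a, R a a)
    (htrans : ∀ a b c, R a b → R b c → R a c)
    (s : Set α) (hfin : s.Finite) (hne : s.Nonempty)
    (hlin : ∀ a ∈ s, ∀ b ∈ s, R a b ∨ R b a) :
    ∃ m ∈ s, ∀ x ∈ s, R x m := by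
  classical
  obtain ⟨t, rfl⟩ : ∃ t : Finset α, s = ↑t := ⟨hfin.toFinset, by simp⟩
  induction t using Finset.induction_on with
  | empty => simp at hne
  | @insert a t ha ih =>
    by_cases hte : t.Nonempty
    · obtain ⟨m, hm, hmax⟩ := ih (Set.Finite.subset hfin (by simp)) (by simpa using hte)
        (fun x hx y hy => hlin x (by simp_all) y (by simp_all))
      rcases hlin a (by simp) m (by simpa using Set.mem_insert_iff.mpr (Or.inr hm)) with h | h
      · refine ⟨m, by simp [hm], ?_⟩
        intro x hx
        rcases (by simpa using hx : x = a ∨ x ∈ t) with hxa | hx'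
        · rw [hxa]; exact h
        · exact hmax x (by simpa using hx')
      · refine ⟨a, by simp, ?_⟩
        intro x hx
        rcases (by simpa using hx : x = a ∨ x ∈ t) with hxa | hx'
        · rw [hxa]; exact hrefl a
        · exact htrans _ _ _ (hmax x (by simpa using hx')) h
    · have : t = ∅ := Finset.not_nonempty_iff_eq_empty.mp hte
      subst this
      refine ⟨a, by simp, ?_⟩
      intro x hx
      have hxa : x = a := by simpa using hx
      rw [hxa]; exact hrefl a

end Gen
namespace S17
open KStruct

/-! ### colors -/

def colF (n : ℕ) (M : KStruct) (w : M.W) : Fin n → Bool := fun p => M.V w p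

def wt {n : ℕ} (c : Fin n → Bool) : ℕ := (Finset.univ.filter fun p => c p = true).card

lemma wt_le {n : ℕ} (c : Fin n → Bool) : wt c ≤ n := by
  classical
  calc (Finset.univ.filter fun p => c p = true).card ≤ Finset.univ.card :=
        Finset.card_filter_le _ _
    _ = n := Finset.card_fin n

lemma wt_lt {n : ℕ} {c d : Fin n → Bool} (hle : ∀ p, c p = true → d p = true)
    (hne : c ≠ d) : wt c < wt d := by
  classical
  apply Finset.card_lt_card
  constructor
  · intro p hp
    simp only [Finset.mem_filter, Finset.mem_univ, true_and] at hp ⊢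
    exact hle p hp
  · intro hsub
    apply hne
    funext p
    by_cases hc : c p = true
    · rw [hc, hle p hc]
    · by_cases hd : d p = true
      · have := hsub (Finset.mem_filter.mpr ⟨Finset.mem_univ p, hd⟩)
        simp only [Finset.mem_filter] at this
        exact absurd this.2 hc
      · rw [Bool.not_eq_true] at hc hd; rw [hc, hd]

section Model
variable {n : ℕ} {M : KStruct}

lemma colF_mono (hM : M.IsModel) {w u : M.W} (h : M.R w u) :
    ∀ p, colF n M w p = true → colF n M u p = true :=
  fun p hp => hM.2.2.2 w u p h hp

lemma colF_eq_allV (hM : M.IsNModel n) {v u : M.W} (h : colF n M v = colF n M u) :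
    ∀ p, M.V v p = M.V u p := by
  intro p
  by_cases hp : p < n
  · exact congrFun h ⟨p, hp⟩
  · rw [hM.2 v p (le_of_not_gt hp), hM.2 u p (le_of_not_gt hp)]

lemma colF_eq_of_between (hM : M.IsModel) {w u : M.W} (hwu : M.R w u)
    (huw : ∀ p, colF n M u p = true → colF n M w p = true) : colF n M w = colF n M u := by
  funext p
  by_cases hw : colF n M w p = true
  · rw [hw, colF_mono hM hwu p hw]
  · by_cases hu : colF n M u p = true
    · exact absurd (huw p hu) hw
    · rw [Bool.not_eq_true] at hw hu; rw [hw, hu]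

/-! ### Part 1: the finite color-preserving submodel of a rooted model -/

open Classical in
noncomputable def build (n : ℕ) (M : KStruct) : ℕ → M.W → Set M.W
  | 0, w => {w}
  | k+1, w => insert w (⋃ c : Fin n → Bool,
      if h : ∃ u, M.R w u ∧ colF n M u = c ∧ colF n M u ≠ colF n M w
      then build n M k h.choose else ∅)

lemma build_finite : ∀ (k : ℕ) (w : M.W), (build n M k w).Finite
  | 0, w => Set.finite_singleton w
  | k+1, w => by
    apply Set.Finite.insert
    apply Set.finite_iUnion
    intro c
    by_cases h : ∃ u, M.R w u ∧ colF n M u = c ∧ colF n M u ≠ colF n M w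
    · rw [dif_pos h]; exact build_finite k _
    · rw [dif_neg h]; exact Set.finite_empty

lemma self_mem_build (k : ℕ) (w : M.W) : w ∈ build n M k w := by
  cases k <;> simp [build]

lemma build_spec (hM : M.IsNModel n) :
    ∀ (k : ℕ) (w : M.W), n ≤ wt (colF n M w) + k →
      ∀ x ∈ build n M k w, ∀ u, M.R x u →
        ∃ v ∈ build n M k w, M.R x v ∧ colF n M v = colF n M u := by
  intro k
  induction k with
  | zero =>
    intro w hw x hx u hxu
    simp only [build, Set.mem_singleton_iff] at hx
    subst hx
    refine ⟨x, self_mem_build 0 x, hM.1.1 x, ?_⟩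
    have hfull : ∀ p, colF n M x p = true := by
      intro p
      by_contra hp
      have hssub : (Finset.univ.filter fun q => colF n M x q = true) ⊂ Finset.univ :=
        Finset.ssubset_univ_iff.mpr
          (fun he => hp (by simpa using Finset.eq_univ_iff_forall.mp he p))
      have h2 := Finset.card_lt_card hssub
      rw [Finset.card_fin] at h2
      have h3 : wt (colF n M x) = (Finset.univ.filter fun q => colF n M x q = true).card := rfl
      omega
    symm
    funext p
    rw [hfull p, colF_mono hM.1 hxu p (hfull p)]
  | succ k ih =>
    intro w hw x hx u hxu
    simp only [build, Set.mem_insert_iff] at hx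
    rcases hx with rfl | hx
    · by_cases hc : colF n M u = colF n M x
      · exact ⟨x, self_mem_build (k+1) x, hM.1.1 x, hc.symm⟩
      · have h : ∃ u', M.R x u' ∧ colF n M u' = colF n M u ∧ colF n M u' ≠ colF n M x :=
          ⟨u, hxu, rfl, hc⟩
        refine ⟨h.choose, ?_, h.choose_spec.1, h.choose_spec.2.1⟩
        simp only [build, Set.mem_insert_iff]
        right
        refine Set.mem_iUnion.mpr ⟨colF n M u, ?_⟩
        rw [dif_pos h]
        exact self_mem_build k _
    · rcases Set.mem_iUnion.mp hx with ⟨c, hxc⟩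
      by_cases h : ∃ u', M.R w u' ∧ colF n M u' = c ∧ colF n M u' ≠ colF n M w
      · rw [dif_pos h] at hxc
        have hwt : wt (colF n M w) < wt (colF n M h.choose) :=
          wt_lt (colF_mono hM.1 h.choose_spec.1) (fun he => h.choose_spec.2.2 he.symm)
        obtain ⟨v, hv, hxv, hcv⟩ := ih h.choose (by omega) x hxc u hxu
        refine ⟨v, ?_, hxv, hcv⟩
        simp only [build, Set.mem_insert_iff]
        right
        refine Set.mem_iUnion.mpr ⟨c, ?_⟩
        rw [dif_pos h]
        exact hv
      · rw [dif_neg h] at hxc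
        exact absurd hxc (Set.notMem_empty x)

lemma part1 (hM : M.IsNModel n) (r : M.W) :
    ∃ S : Set M.W, S.Finite ∧ r ∈ S ∧ ColorPresSub M S := by
  refine ⟨build n M n r, build_finite n r, self_mem_build n r, ?_⟩
  intro w hw u hwu
  obtain ⟨v, hv, hwv, hcv⟩ := build_spec hM n r (by omega) w hw u hwu
  exact ⟨v, hv, hwv, colF_eq_allV hM hcv⟩

end Model
end S17
namespace S17
open KStruct

lemma noImp_sat_iff {N M : KStruct} {f : N.W → M.W} (hf : Monotonic N M f) :
    ∀ (φ : Formula), φ.noImp → ∀ w, (N.sat w φ ↔ M.sat (f w) φ) := by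
  intro φ
  induction φ with
  | bot => intro _ w; exact Iff.rfl
  | var p => intro _ w; simp only [KStruct.sat]; rw [hf.2 w p]
  | and φ ψ ihφ ihψ =>
    intro h w
    simp only [KStruct.sat]
    exact and_congr (ihφ h.1 w) (ihψ h.2 w)
  | or φ ψ ihφ ihψ =>
    intro h w
    simp only [KStruct.sat]
    exact or_congr (ihφ h.1 w) (ihψ h.2 w)
  | imp φ ψ _ _ => intro h; exact absurd h not_false

lemma nnil_MR : ∀ (φ : Formula), φ.IsNNIL → MR φ := by
  intro φ
  induction φ with
  | bot => intro _ N M _ _ f hf w hs; exact hs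
  | var p =>
    intro _ N M _ _ f hf w hs
    simp only [KStruct.sat] at hs ⊢
    rw [← hf.2 w p]; exact hs
  | and φ ψ ihφ ihψ =>
    intro h N M hN hM f hf w hs
    exact ⟨ihφ h.1 N M hN hM f hf w hs.1, ihψ h.2 N M hN hM f hf w hs.2⟩
  | or φ ψ ihφ ihψ =>
    intro h N M hN hM f hf w hs
    rcases hs with hs | hs
    · exact Or.inl (ihφ h.1 N M hN hM f hf w hs)
    · exact Or.inr (ihψ h.2 N M hN hM f hf w hs)
  | imp φ ψ _ ihψ =>
    intro h N M hN hM f hf w hs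
    intro u hwu hφ
    have h1 : M.sat (f u) φ := (noImp_sat_iff hf φ h.1 u).mp hφ
    have h2 : M.sat (f u) ψ := hs (f u) (hf.1 w u hwu) h1
    exact ihψ h.2 N M hN hM f hf u h2

lemma restrict_isModel {M : KStruct} (hM : M.IsModel) (S : Set M.W) :
    (M.restrict S).IsModel :=
  ⟨fun w => hM.1 w.1, fun w u v h1 h2 => hM.2.1 w.1 u.1 v.1 h1 h2,
   fun w u h1 h2 => Subtype.ext (hM.2.2.1 w.1 u.1 h1 h2),
   fun w u p h hv => hM.2.2.2 w.1 u.1 p h hv⟩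

lemma incl_monotonic {M : KStruct} (S : Set M.W) :
    Monotonic (M.restrict S) M Subtype.val :=
  ⟨fun _ _ h => h, fun _ _ => rfl⟩

end S17
namespace S17
open KStruct

/-! ### Part 2: trees -/

section Tree
variable (n : ℕ) (M : KStruct) (r : M.W)

/-- transition points: points whose color differs from that of every proper predecessor -/
def Tset : Set M.W := {w | ∀ u, M.R u w → u ≠ w → colF n M u ≠ colF n M w}

/-- the proper `Tset`-predecessors of `w` -/
def Pset (w : M.W) : Set M.W := {u | u ∈ Tset n M ∧ M.R u w ∧ u ≠ w}

noncomputable def tdep (w : M.W) : ℕ := (Pset n M w).ncard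

open Classical in
/-- the greatest proper `Tset`-predecessor -/
noncomputable def predT (w : M.W) : M.W :=
  if h : ∃ m ∈ Pset n M w, ∀ x ∈ Pset n M w, M.R x m then h.choose else w

/-- iterated type structure -/
def Ety : ℕ → Type
  | 0 => Fin n → Bool
  | k+1 => (Fin n → Bool) × Set (Ety k)

def Etype : (k : ℕ) → M.W → Ety n k
  | 0, w => colF n M w
  | k+1, w => (colF n M w, {e | ∃ u ∈ Tset n M, M.R w u ∧ Etype k u = e})

open Classical in
noncomputable def wit (v : M.W) (k : ℕ) (e : Ety n k) : M.W :=
  if h : ∃ u, u ∈ Tset n M ∧ M.R v u ∧ Etype n M k u = e then h.choose else v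

noncomputable def fAux : ℕ → M.W → M.W
  | 0, _ => r
  | i+1, w => wit n M (fAux i (predT n M w)) (n - (i+1)) (Etype n M (n-(i+1)) w)

noncomputable def fT (w : M.W) : M.W := fAux n M r (tdep n M w) w

def Sset : Set M.W := fT n M r '' Tset n M

variable {n M r}

lemma Ecol : ∀ {k : ℕ} {v w : M.W}, Etype n M k v = Etype n M k w → colF n M v = colF n M w
  | 0, _, _, h => h
  | k+1, _, _, h => congrArg Prod.fst h

section Hyps
variable (hM : M.IsNModel n) (ht : IsTree M r)
include hM ht

omit hM in
lemma Pset_finite (w : M.W) : (Pset n M w).Finite :=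
  (ht.2.1 w).subset (fun u hu => hu.2.1)

lemma predT_spec {w : M.W} (hne : (Pset n M w).Nonempty) :
    predT n M w ∈ Pset n M w ∧ ∀ x ∈ Pset n M w, M.R x (predT n M w) := by
  classical
  have h : ∃ m ∈ Pset n M w, ∀ x ∈ Pset n M w, M.R x m := by
    apply exists_greatest M.R hM.1.1 hM.1.2.1 _ (Pset_finite ht w) hne
    intro a ha b hb
    exact ht.2.2 w a b ha.2.1 hb.2.1
  rw [predT, dif_pos h]
  exact h.choose_spec

lemma r_mem_T : r ∈ Tset n M := by
  intro u hur hne _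
  exact hne (hM.1.2.2.1 u r hur (ht.1 u))

lemma Pset_r : Pset n M r = ∅ := by
  ext u
  simp only [Pset, Set.mem_setOf_eq, Set.mem_empty_iff_false, iff_false, not_and]
  intro _ hur hne
  exact hne (hM.1.2.2.1 u r hur (ht.1 u))

lemma tdep_r : tdep n M r = 0 := by rw [tdep, Pset_r hM ht, Set.ncard_empty]

lemma eq_r_of_tdep_zero {w : M.W} (hw : tdep n M w = 0) : w = r := by
  by_contra hne
  have hr : r ∈ Pset n M w := ⟨r_mem_T hM ht, ht.1 w, fun h => hne h.symm⟩
  have h2 := (Set.ncard_pos (Pset_finite ht w)).mpr ⟨r, hr⟩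
  simp only [tdep] at hw
  omega

omit hM ht in
lemma tdep_pos_nonempty {w : M.W} (hw : tdep n M w ≠ 0) : (Pset n M w).Nonempty :=
  Set.nonempty_of_ncard_ne_zero hw

omit hM in
lemma nonempty_tdep_pos {w : M.W} (hne : (Pset n M w).Nonempty) : 0 < tdep n M w :=
  (Set.ncard_pos (Pset_finite ht w)).mpr hne

lemma Pset_predT {w : M.W} (hne : (Pset n M w).Nonempty) :
    Pset n M (predT n M w) = Pset n M w \ {predT n M w} := by
  obtain ⟨hmem, hmax⟩ := predT_spec hM ht hne
  set m := predT n M w with hm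
  ext u
  constructor
  · rintro ⟨huT, hum, hune⟩
    have huw : M.R u w := hM.1.2.1 u m w hum hmem.2.1
    have hunew : u ≠ w := by
      rintro rfl
      exact hmem.2.2 (hM.1.2.2.1 _ _ hmem.2.1 hum)
    exact ⟨⟨huT, huw, hunew⟩, hune⟩
  · rintro ⟨⟨huT, huw, hune⟩, hum⟩
    exact ⟨huT, hmax u ⟨huT, huw, hune⟩, hum⟩

lemma tdep_predT {w : M.W} (hne : (Pset n M w).Nonempty) :
    tdep n M (predT n M w) = tdep n M w - 1 := by
  simp only [tdep]
  rw [Pset_predT hM ht hne,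
    Set.ncard_diff_singleton_of_mem (predT_spec hM ht hne).1]

lemma tdep_le_wt : ∀ (i : ℕ) (w : M.W), w ∈ Tset n M → tdep n M w = i → i ≤ wt (colF n M w) := by
  intro i
  induction i using Nat.strong_induction_on with
  | _ i ih =>
    intro w hw hdep
    rcases Nat.eq_zero_or_pos i with rfl | hpos
    · exact Nat.zero_le _
    have hne : (Pset n M w).Nonempty := tdep_pos_nonempty (by omega)
    obtain ⟨hmem, _⟩ := predT_spec hM ht hne
    set m := predT n M w
    have hdm : tdep n M m = i - 1 := by rw [tdep_predT hM ht hne, hdep]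
    have h1 : i - 1 ≤ wt (colF n M m) := ih (i-1) (by omega) m hmem.1 hdm
    have h2 : wt (colF n M m) < wt (colF n M w) :=
      wt_lt (colF_mono hM.1 hmem.2.1) (hw m hmem.2.1 hmem.2.2)
    omega

lemma tdep_le_n {w : M.W} (hw : w ∈ Tset n M) : tdep n M w ≤ n :=
  le_trans (tdep_le_wt hM ht _ w hw rfl) (wt_le _)

lemma main_inv : ∀ (i : ℕ), ∀ w ∈ Tset n M, tdep n M w = i →
    fT n M r w ∈ Tset n M ∧
    Etype n M (n - i) (fT n M r w) = Etype n M (n - i) w ∧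
    ((Pset n M w).Nonempty → M.R (fT n M r (predT n M w)) (fT n M r w)) := by
  intro i
  induction i with
  | zero =>
    intro w hw hdep
    have hwr : w = r := eq_r_of_tdep_zero hM ht hdep
    have hfw : fT n M r w = w := by
      rw [hwr]; unfold fT; rw [tdep_r hM ht]; simp [fAux]
    rw [hfw]
    refine ⟨hw, rfl, ?_⟩
    intro hne
    have h2 := nonempty_tdep_pos ht hne
    omega
  | succ i ih =>
    intro w hw hdep
    have hne : (Pset n M w).Nonempty := tdep_pos_nonempty (by omega)
    obtain ⟨hmem, hmax⟩ := predT_spec hM ht hne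
    set s := predT n M w with hs
    have hds : tdep n M s = i := by rw [tdep_predT hM ht hne, hdep]; omega
    obtain ⟨hsT, hsE, -⟩ := ih s hmem.1 hds
    have hin : i + 1 ≤ n := by rw [← hdep]; exact tdep_le_n hM ht hw
    have hk : n - i = (n - (i+1)) + 1 := by omega
    rw [hk] at hsE
    -- the type of w at level n-(i+1) is realized above fT s
    have hwmem : Etype n M (n-(i+1)) w ∈
        {e | ∃ u ∈ Tset n M, M.R (fT n M r s) u ∧ Etype n M (n-(i+1)) u = e} := by
      have h2 : {e | ∃ u ∈ Tset n M, M.R (fT n M r s) u ∧ Etype n M (n-(i+1)) u = e}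
          = {e | ∃ u ∈ Tset n M, M.R s u ∧ Etype n M (n-(i+1)) u = e} := by
        have := congrArg Prod.snd hsE
        simpa [Etype] using this
      rw [h2]
      exact ⟨w, hw, hmem.2.1, rfl⟩
    have hex : ∃ u, u ∈ Tset n M ∧ M.R (fT n M r s) u ∧
        Etype n M (n-(i+1)) u = Etype n M (n-(i+1)) w := by
      obtain ⟨u, hu1, hu2, hu3⟩ := hwmem
      exact ⟨u, hu1, hu2, hu3⟩
    have hfw : fT n M r w = wit n M (fT n M r s) (n-(i+1)) (Etype n M (n-(i+1)) w) := by
      rw [fT, hdep]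
      show wit n M (fAux n M r i (predT n M w)) _ _ = _
      rw [← hs, show fAux n M r i s = fT n M r s by rw [fT, hds]]
    have hwit : wit n M (fT n M r s) (n-(i+1)) (Etype n M (n-(i+1)) w) ∈ Tset n M ∧
        M.R (fT n M r s) (wit n M (fT n M r s) (n-(i+1)) (Etype n M (n-(i+1)) w)) ∧
        Etype n M (n-(i+1)) (wit n M (fT n M r s) (n-(i+1)) (Etype n M (n-(i+1)) w))
          = Etype n M (n-(i+1)) w := by
      rw [wit, dif_pos hex]
      exact hex.choose_spec
    rw [hfw]
    exact ⟨hwit.1, hwit.2.2, fun _ => hwit.2.1⟩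

lemma fT_mono : ∀ (i : ℕ), ∀ w u, w ∈ Tset n M → u ∈ Tset n M → tdep n M u = i →
    M.R w u → M.R (fT n M r w) (fT n M r u) := by
  intro i
  induction i using Nat.strong_induction_on with
  | _ i ih =>
    intro w u hwT huT hdep hwu
    by_cases hew : w = u
    · subst hew; exact hM.1.1 _
    have hwP : w ∈ Pset n M u := ⟨hwT, hwu, hew⟩
    have hne : (Pset n M u).Nonempty := ⟨w, hwP⟩
    obtain ⟨hmem, hmax⟩ := predT_spec hM ht hne
    set s := predT n M u with hs
    have hipos : 0 < i := by rw [← hdep]; exact nonempty_tdep_pos ht hne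
    have hds : tdep n M s = i - 1 := by rw [tdep_predT hM ht hne, hdep]
    have h1 : M.R (fT n M r w) (fT n M r s) :=
      ih (i-1) (by omega) w s hwT hmem.1 hds (hmax w hwP)
    have h2 : M.R (fT n M r s) (fT n M r u) :=
      (main_inv hM ht i u huT hdep).2.2 hne
    exact hM.1.2.1 _ _ _ h1 h2

lemma fT_mem_T {w : M.W} (hw : w ∈ Tset n M) : fT n M r w ∈ Tset n M :=
  (main_inv hM ht (tdep n M w) w hw rfl).1

lemma fT_colF {w : M.W} (hw : w ∈ Tset n M) : colF n M (fT n M r w) = colF n M w :=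
  Ecol (main_inv hM ht (tdep n M w) w hw rfl).2.1

lemma fT_r : fT n M r r = r := by unfold fT; rw [tdep_r hM ht]; simp [fAux]

lemma r_mem_Sset : r ∈ Sset n M r := ⟨r, r_mem_T hM ht, fT_r hM ht⟩
omit hM ht in
lemma RT_fin : ∀ k : ℕ, (Set.range (Etype n M k)).Finite := by
  intro k
  induction k with
  | zero =>
    haveI : Finite (Ety n 0) := inferInstanceAs (Finite (Fin n → Bool))
    exact Set.Finite.subset Set.finite_univ (Set.subset_univ _)
  | succ k ih =>
    apply Set.Finite.subset (Set.Finite.prod (Set.finite_univ)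
      (Set.Finite.finite_subsets ih))
    rintro e ⟨u, rfl⟩
    refine Set.mem_prod.mpr ⟨Set.mem_univ _, ?_⟩
    intro e' he'
    obtain ⟨u', _, _, hu'⟩ := he'
    exact ⟨u', hu'⟩

lemma lev_fin : ∀ i : ℕ, (fT n M r '' {w | w ∈ Tset n M ∧ tdep n M w = i}).Finite := by
  intro i
  induction i with
  | zero =>
    apply Set.Finite.subset (Set.finite_singleton r)
    rintro x ⟨w, ⟨hwT, hd⟩, rfl⟩
    have hwr : w = r := eq_r_of_tdep_zero hM ht hd
    rw [hwr, fT_r hM ht]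
    rfl
  | succ i ih =>
    apply Set.Finite.subset (Set.Finite.image
      (fun q : M.W × Ety n (n-(i+1)) => wit n M q.1 (n-(i+1)) q.2)
      (Set.Finite.prod ih (RT_fin (n-(i+1)))))
    rintro x ⟨w, ⟨hwT, hd⟩, rfl⟩
    have hne : (Pset n M w).Nonempty := tdep_pos_nonempty (by omega)
    have hds : tdep n M (predT n M w) = i := by rw [tdep_predT hM ht hne, hd]; omega
    have hfw : fT n M r w = wit n M (fT n M r (predT n M w)) (n-(i+1)) (Etype n M (n-(i+1)) w) := by
      rw [fT, hd]
      show wit n M (fAux n M r i (predT n M w)) _ _ = _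
      rw [show fAux n M r i (predT n M w) = fT n M r (predT n M w) by rw [fT, hds]]
    rw [hfw]
    exact ⟨(fT n M r (predT n M w), Etype n M (n-(i+1)) w),
      Set.mem_prod.mpr ⟨⟨predT n M w, ⟨(predT_spec hM ht hne).1.1, hds⟩, rfl⟩, ⟨w, rfl⟩⟩, rfl⟩

lemma Sset_finite : (Sset n M r).Finite := by
  apply Set.Finite.subset (Set.Finite.biUnion (Set.finite_Iio (n+1))
    (fun i _ => lev_fin hM ht i))
  rintro x ⟨w, hwT, rfl⟩
  have hle := tdep_le_n hM ht hwT
  exact Set.mem_biUnion (Set.mem_Iio.mpr (by omega)) ⟨w, ⟨hwT, rfl⟩, rfl⟩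

end Hyps

variable (n M) in
open Classical in
noncomputable def tmin (w : M.W) : M.W :=
  if h : ∃ m ∈ {u | M.R u w ∧ colF n M u = colF n M w},
      ∀ x ∈ {u | M.R u w ∧ colF n M u = colF n M w}, M.R m x
  then h.choose else w

section Hyps2
variable (hM : M.IsNModel n) (ht : IsTree M r)
include hM ht

lemma tmin_spec (w : M.W) : (M.R (tmin n M w) w ∧ colF n M (tmin n M w) = colF n M w) ∧
    ∀ x, M.R x w → colF n M x = colF n M w → M.R (tmin n M w) x := by
  classical
  have h : ∃ m ∈ {u | M.R u w ∧ colF n M u = colF n M w},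
      ∀ x ∈ {u | M.R u w ∧ colF n M u = colF n M w}, M.R m x := by
    obtain ⟨m, hm, hmax⟩ := exists_greatest (fun a b => M.R b a)
      hM.1.1 (fun a b c hab hbc => hM.1.2.1 c b a hbc hab)
      {u | M.R u w ∧ colF n M u = colF n M w}
      ((ht.2.1 w).subset (fun u hu => hu.1))
      ⟨w, hM.1.1 w, rfl⟩
      (fun a ha b hb => (ht.2.2 w a b ha.1 hb.1).symm)
    exact ⟨m, hm, hmax⟩
  rw [tmin, dif_pos h]
  exact ⟨h.choose_spec.1, fun x hx hcx => h.choose_spec.2 x ⟨hx, hcx⟩⟩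

lemma tmin_T (w : M.W) : tmin n M w ∈ Tset n M := by
  obtain ⟨⟨hR, hcol⟩, hmin⟩ := tmin_spec hM ht w
  intro u huR hune hucol
  have hux : M.R u w := hM.1.2.1 u _ w huR hR
  have : M.R (tmin n M w) u := hmin u hux (hucol.trans hcol)
  exact hune (hM.1.2.2.1 u _ huR this)

lemma tmin_fix {w : M.W} (hw : w ∈ Tset n M) : tmin n M w = w := by
  obtain ⟨⟨hR, hcol⟩, _⟩ := tmin_spec hM ht w
  by_contra hne
  exact hw (tmin n M w) hR hne hcol

lemma tmin_mono {w u : M.W} (hwu : M.R w u) : M.R (tmin n M w) (tmin n M u) := by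
  obtain ⟨⟨hRw, hcw⟩, hminw⟩ := tmin_spec hM ht w
  obtain ⟨⟨hRu, hcu⟩, hminu⟩ := tmin_spec hM ht u
  have hau : M.R (tmin n M w) u := hM.1.2.1 _ w u hRw hwu
  rcases ht.2.2 u (tmin n M w) (tmin n M u) hau hRu with h | h
  · exact h
  · -- R (tmin u) (tmin w); then colF w = colF u and tmin u ∈ Q w
    have hbw : M.R (tmin n M u) w := hM.1.2.1 _ _ w (hM.1.2.1 _ _ _ h hRw) (hM.1.1 w)
    have hcwu : colF n M w = colF n M u := by
      apply colF_eq_of_between hM.1 hwu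
      intro p hp
      have h1 : colF n M (tmin n M u) p = true := by rw [hcu]; exact hp
      exact colF_mono hM.1 hbw p h1
    exact hminw (tmin n M u) hbw (hcu.trans hcwu.symm)
end Hyps2
end Tree
section Final
variable {n : ℕ} {M : KStruct} {r : M.W} (hM : M.IsNModel n) (ht : IsTree M r)
include hM ht

lemma Sset_colorPres : ColorPresSub M (Sset n M r) := by
  rintro x ⟨v, hvT, rfl⟩ u hxu
  by_cases hcol : colF n M (fT n M r v) = colF n M u
  · exact ⟨fT n M r v, ⟨v, hvT, rfl⟩, hM.1.1 _, colF_eq_allV hM hcol⟩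
  · have hwt1 : wt (colF n M (fT n M r v)) < wt (colF n M u) :=
      wt_lt (colF_mono hM.1 hxu) hcol
    have hdv : tdep n M v ≤ wt (colF n M v) := tdep_le_wt hM ht _ v hvT rfl
    have hcc : colF n M (fT n M r v) = colF n M v := fT_colF hM ht hvT
    have hwtn : wt (colF n M u) ≤ n := wt_le _
    have hlt : tdep n M v < n := by rw [hcc] at hwt1; omega
    obtain ⟨k', hk⟩ : ∃ k', n - tdep n M v = k' + 1 := ⟨n - tdep n M v - 1, by omega⟩
    have inv := (main_inv hM ht (tdep n M v) v hvT rfl).2.1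
    rw [hk] at inv
    obtain ⟨⟨hzu, hzc⟩, -⟩ := tmin_spec hM ht u
    set z := tmin n M u with hzdef
    have hzT : z ∈ Tset n M := tmin_T hM ht u
    rcases ht.2.2 u (fT n M r v) z hxu hzu with h | h
    · -- R (fT v) z
      have hsets : {e | ∃ u' ∈ Tset n M, M.R (fT n M r v) u' ∧ Etype n M k' u' = e}
          = {e | ∃ u' ∈ Tset n M, M.R v u' ∧ Etype n M k' u' = e} := by
        simpa [Etype] using congrArg Prod.snd inv
      have hmem : Etype n M k' z ∈
          {e | ∃ u' ∈ Tset n M, M.R (fT n M r v) u' ∧ Etype n M k' u' = e} :=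
        ⟨z, hzT, h, rfl⟩
      rw [hsets] at hmem
      obtain ⟨z', hz'T, hvz', hz'E⟩ := hmem
      refine ⟨fT n M r z', ⟨z', hz'T, rfl⟩,
        fT_mono hM ht (tdep n M z') v z' hvT hz'T rfl hvz', ?_⟩
      have : colF n M (fT n M r z') = colF n M u :=
        (fT_colF hM ht hz'T).trans ((Ecol hz'E).trans hzc)
      exact colF_eq_allV hM this
    · -- R z (fT v) : contradiction with hcol
      exfalso
      apply hcol
      apply colF_eq_of_between hM.1 hxu
      intro p hp
      have h1 : colF n M z p = true := by rw [hzc]; exact hp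
      exact colF_mono hM.1 h p h1

omit hM ht in
noncomputable def Fmap (hM : M.IsNModel n) (ht : IsTree M r) (w : M.W) :
    (M.restrict (Sset n M r)).W :=
  ⟨fT n M r (tmin n M w), ⟨tmin n M w, tmin_T hM ht w, rfl⟩⟩

lemma Fmap_mono : Monotonic M (M.restrict (Sset n M r)) (Fmap hM ht) := by
  constructor
  · intro w u hwu
    exact fT_mono hM ht (tdep n M (tmin n M u)) _ _ (tmin_T hM ht w) (tmin_T hM ht u) rfl
      (tmin_mono hM ht hwu)
  · intro w p
    show M.V (fT n M r (tmin n M w)) p = M.V w p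
    have h1 : colF n M (fT n M r (tmin n M w)) = colF n M w :=
      (fT_colF hM ht (tmin_T hM ht w)).trans (tmin_spec hM ht w).1.2
    exact colF_eq_allV hM h1 p

lemma Fmap_surj : Function.Surjective (Fmap hM ht) := by
  rintro ⟨x, v, hvT, rfl⟩
  refine ⟨v, Subtype.ext ?_⟩
  show fT n M r (tmin n M v) = fT n M r v
  rw [tmin_fix hM ht hvT]

lemma Fmap_r : (Fmap hM ht r).val = r := by
  show fT n M r (tmin n M r) = r
  rw [tmin_fix hM ht (r_mem_T hM ht), fT_r hM ht]

end Final
end S17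

/-- every rooted n-model has a finite color-preserving submodel with the
same root; if the model is tree-like the submodel can moreover be chosen to be a
surjective monotonic image of it, so that root satisfaction of MR-formulas (in
particular of NNIL-formulas) is unchanged. -/
theorem rooted_model_has_finite_color_preserving_submodel (n : ℕ) (M : KStruct)
    (hM : M.IsNModel n) (r : M.W) (hr : IsRoot M r) :
    (∃ S : Set M.W, S.Finite ∧ r ∈ S ∧ ColorPresSub M S) ∧
    (IsTree M r → ∃ S : Set M.W, S.Finite ∧ ∃ hrS : r ∈ S, ColorPresSub M S ∧
      (∃ f : M.W → (M.restrict S).W, Monotonic M (M.restrict S) f ∧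
        Function.Surjective f) ∧
      (∀ φ : Formula, MR φ → (M.sat r φ ↔ (M.restrict S).sat ⟨r, hrS⟩ φ)) ∧
      (∀ φ : Formula, φ.IsNNIL → (M.sat r φ ↔ (M.restrict S).sat ⟨r, hrS⟩ φ))) := by
  
  constructor
  · exact S17.part1 hM r
  · intro ht
    have hrS : r ∈ S17.Sset n M r := S17.r_mem_Sset hM ht
    have hFr : S17.Fmap hM ht r = (⟨r, hrS⟩ : (M.restrict (S17.Sset n M r)).W) :=
      Subtype.ext (S17.Fmap_r hM ht)
    have hMRiff : ∀ φ : Formula, MR φ →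
        (M.sat r φ ↔ (M.restrict (S17.Sset n M r)).sat ⟨r, hrS⟩ φ) := by
      intro φ hφ
      constructor
      · intro h
        exact hφ (M.restrict (S17.Sset n M r)) M
          (S17.restrict_isModel hM.1 _) hM.1 Subtype.val (S17.incl_monotonic _)
          ⟨r, hrS⟩ h
      · intro h
        have h2 : (M.restrict (S17.Sset n M r)).sat (S17.Fmap hM ht r) φ := by
          rw [hFr]; exact h
        exact hφ M (M.restrict (S17.Sset n M r)) hM.1
          (S17.restrict_isModel hM.1 _) (S17.Fmap hM ht) (S17.Fmap_mono hM ht) r h2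
    exact ⟨S17.Sset n M r, S17.Sset_finite hM ht, hrS, S17.Sset_colorPres hM ht,
      ⟨S17.Fmap hM ht, S17.Fmap_mono hM ht, S17.Fmap_surj hM ht⟩, hMRiff,
      fun φ hφ => hMRiff φ (S17.nnil_MR φ hφ)⟩
end

section
/- For every IPC-formula φ and every Kripke frame F: F ⊨ φ if and only if F ⊨ φ', where φ' = φ'_+ → s_φ is the frame-normal form of φ. Hence every IPC-formula is frame-equivalent to a formula of implication complexity at most 2. -/
/-- `s_ψ`: the formula `ψ` itself for a variable or `⊥`, and the fresh variable `s ψ`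
for a compound formula `ψ` -/
def svar (s : Formula → ℕ) : Formula → Formula
  | Formula.bot => Formula.bot
  | Formula.var p => Formula.var p
  | Formula.and φ ψ => Formula.var (s (Formula.and φ ψ))
  | Formula.or φ ψ => Formula.var (s (Formula.or φ ψ))
  | Formula.imp φ ψ => Formula.var (s (Formula.imp φ ψ))

/-- `φ'_+` of the frame-normal form construction -/
def plusForm (s : Formula → ℕ) : Formula → Formula
  | Formula.bot => Formula.top
  | Formula.var _ => Formula.top
  | Formula.and φ ψ => Formula.and (plusForm s φ) (Formula.and (plusForm s ψ)
      (Formula.iff_ (Formula.and (svar s φ) (svar s ψ)) (svar s (Formula.and φ ψ))))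
  | Formula.or φ ψ => Formula.and (plusForm s φ) (Formula.and (plusForm s ψ)
      (Formula.iff_ (Formula.or (svar s φ) (svar s ψ)) (svar s (Formula.or φ ψ))))
  | Formula.imp φ ψ => Formula.and (plusForm s φ) (Formula.and (plusForm s ψ)
      (Formula.iff_ (Formula.imp (svar s φ) (svar s ψ)) (svar s (Formula.imp φ ψ))))

/-- the frame-normal form `φ' = φ'_+ → s_φ` -/
def frameNF (s : Formula → ℕ) (φ : Formula) : Formula :=
  Formula.imp (plusForm s φ) (svar s φ)

section Aux

open Formula KStruct Classical

/-- Satisfaction is persistent. -/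
lemma sat_persist (M : KStruct)
    (htrans : ∀ w u v, M.R w u → M.R u v → M.R w v)
    (hpers : ∀ w u p, M.R w u → M.V w p = true → M.V u p = true)
    (ψ : Formula) : ∀ w u, M.R w u → M.sat w ψ → M.sat u ψ := by
  induction ψ with
  | bot => exact fun w u _ h => h
  | var p => exact fun w u hwu h => hpers w u p hwu h
  | and φ ψ ih1 ih2 => exact fun w u hwu h => ⟨ih1 w u hwu h.1, ih2 w u hwu h.2⟩
  | or φ ψ ih1 ih2 =>
      rintro w u hwu (h | h)
      · exact Or.inl (ih1 w u hwu h)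
      · exact Or.inr (ih2 w u hwu h)
  | imp φ ψ _ _ =>
      exact fun w u hwu h t hut hφ => h t (htrans w u t hwu hut) hφ

/-- Key lemma: above a point satisfying `plusForm s ψ`, `svar s ψ` and `ψ`
are equivalent. -/
lemma svar_iff (M : KStruct) (s : Formula → ℕ)
    (htrans : ∀ w u v, M.R w u → M.R u v → M.R w v) :
    ∀ (ψ : Formula) (u : M.W), M.sat u (plusForm s ψ) →
      ∀ v, M.R u v → (M.sat v (svar s ψ) ↔ M.sat v ψ) := by
  intro ψ
  induction ψ with
  | bot => intro u _ v _; exact Iff.rfl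
  | var p => intro u _ v _; exact Iff.rfl
  | and φ ψ ih1 ih2 =>
      rintro u ⟨h1, h2, h3, h4⟩ v huv
      constructor
      · intro hv
        have hX := h4 v huv hv
        exact ⟨(ih1 u h1 v huv).1 hX.1, (ih2 u h2 v huv).1 hX.2⟩
      · intro hv
        exact h3 v huv ⟨(ih1 u h1 v huv).2 hv.1, (ih2 u h2 v huv).2 hv.2⟩
  | or φ ψ ih1 ih2 =>
      rintro u ⟨h1, h2, h3, h4⟩ v huv
      constructor
      · intro hv
        rcases h4 v huv hv with h | h
        · exact Or.inl ((ih1 u h1 v huv).1 h)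
        · exact Or.inr ((ih2 u h2 v huv).1 h)
      · rintro (h | h)
        · exact h3 v huv (Or.inl ((ih1 u h1 v huv).2 h))
        · exact h3 v huv (Or.inr ((ih2 u h2 v huv).2 h))
  | imp φ ψ ih1 ih2 =>
      rintro u ⟨h1, h2, h3, h4⟩ v huv
      constructor
      · intro hv t hvt hφt
        have hut := htrans u v t huv hvt
        exact (ih2 u h2 t hut).1 (h4 v huv hv t hvt ((ih1 u h1 t hut).2 hφt))
      · intro hv
        refine h3 v huv ?_
        intro t hvt hsφ
        have hut := htrans u v t huv hvt
        exact (ih2 u h2 t hut).2 (hv t hvt ((ih1 u h1 t hut).1 hsφ))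

/-- Two valuations that agree on the variables of `ψ` give the same truth values. -/
lemma sat_agree (F : KFrame) (V V' : F.W → ℕ → Bool) :
    ∀ ψ : Formula, (∀ p, Formula.occurs p ψ → ∀ w, V w p = V' w p) →
    ∀ w : F.W, ((F.model V).sat w ψ ↔ (F.model V').sat w ψ) := by
  intro ψ
  induction ψ with
  | bot => intro _ _; exact Iff.rfl
  | var p =>
      intro h w
      show V w p = true ↔ V' w p = true
      rw [h p rfl w]
  | and φ ψ ih1 ih2 =>
      intro h w
      exact and_congr (ih1 (fun p hp => h p (Or.inl hp)) w)
        (ih2 (fun p hp => h p (Or.inr hp)) w)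
  | or φ ψ ih1 ih2 =>
      intro h w
      exact or_congr (ih1 (fun p hp => h p (Or.inl hp)) w)
        (ih2 (fun p hp => h p (Or.inr hp)) w)
  | imp φ ψ ih1 ih2 =>
      intro h w
      constructor
      · intro hs t hwt hφ
        exact (ih2 (fun p hp => h p (Or.inr hp)) t).1
          (hs t hwt ((ih1 (fun p hp => h p (Or.inl hp)) t).2 hφ))
      · intro hs t hwt hφ
        exact (ih2 (fun p hp => h p (Or.inr hp)) t).2
          (hs t hwt ((ih1 (fun p hp => h p (Or.inl hp)) t).1 hφ))

/-- For a valuation `V'` where fresh variables track the truth of the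
corresponding formulas, `svar s ψ` under `V'` says exactly `ψ` under `V`. -/
lemma svar_truth (F : KFrame) (V V' : F.W → ℕ → Bool) (s : Formula → ℕ)
    (hcomp : ∀ (ψ : Formula) (w), V' w (s ψ) = decide ((F.model V).sat w ψ))
    (hagree : ∀ p, (¬ ∃ χ : Formula, s χ = p) → ∀ w, V' w p = V w p) :
    ∀ ψ : Formula, (∀ p, Formula.occurs p ψ → ¬ ∃ χ : Formula, s χ = p) →
    ∀ w, ((F.model V').sat w (svar s ψ) ↔ (F.model V).sat w ψ) := by
  intro ψ hψ w
  cases ψ with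
  | bot => exact Iff.rfl
  | var p =>
      show V' w p = true ↔ V w p = true
      rw [hagree p (hψ p rfl) w]
  | and φ ψ =>
      show V' w (s (Formula.and φ ψ)) = true ↔ _
      rw [hcomp _ w]; exact decide_eq_true_iff
  | or φ ψ =>
      show V' w (s (Formula.or φ ψ)) = true ↔ _
      rw [hcomp _ w]; exact decide_eq_true_iff
  | imp φ ψ =>
      show V' w (s (Formula.imp φ ψ)) = true ↔ _
      rw [hcomp _ w]; exact decide_eq_true_iff

/-- Under such a valuation `V'`, `plusForm s ψ` holds everywhere. -/
lemma plus_true (F : KFrame) (V V' : F.W → ℕ → Bool) (s : Formula → ℕ)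
    (hcomp : ∀ (ψ : Formula) (w), V' w (s ψ) = decide ((F.model V).sat w ψ))
    (hagree : ∀ p, (¬ ∃ χ : Formula, s χ = p) → ∀ w, V' w p = V w p) :
    ∀ ψ : Formula, (∀ p, Formula.occurs p ψ → ¬ ∃ χ : Formula, s χ = p) →
    ∀ w, (F.model V').sat w (plusForm s ψ) := by
  intro ψ
  have ST := svar_truth F V V' s hcomp hagree
  induction ψ with
  | bot => intro _ w; exact fun u _ h => h
  | var p => intro _ w; exact fun u _ h => h
  | and φ ψ ih1 ih2 =>
      intro h w
      have hφ : ∀ p, Formula.occurs p φ → ¬ ∃ χ : Formula, s χ = p :=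
        fun p hp => h p (Or.inl hp)
      have hψ : ∀ p, Formula.occurs p ψ → ¬ ∃ χ : Formula, s χ = p :=
        fun p hp => h p (Or.inr hp)
      refine ⟨ih1 hφ w, ih2 hψ w, ?_, ?_⟩
      · intro t _ ht
        exact (ST _ h t).2 ⟨(ST φ hφ t).1 ht.1, (ST ψ hψ t).1 ht.2⟩
      · intro t _ ht
        have := (ST _ h t).1 ht
        exact ⟨(ST φ hφ t).2 this.1, (ST ψ hψ t).2 this.2⟩
  | or φ ψ ih1 ih2 =>
      intro h w
      have hφ : ∀ p, Formula.occurs p φ → ¬ ∃ χ : Formula, s χ = p :=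
        fun p hp => h p (Or.inl hp)
      have hψ : ∀ p, Formula.occurs p ψ → ¬ ∃ χ : Formula, s χ = p :=
        fun p hp => h p (Or.inr hp)
      refine ⟨ih1 hφ w, ih2 hψ w, ?_, ?_⟩
      · rintro t _ (ht | ht)
        · exact (ST _ h t).2 (Or.inl ((ST φ hφ t).1 ht))
        · exact (ST _ h t).2 (Or.inr ((ST ψ hψ t).1 ht))
      · intro t _ ht
        rcases (ST _ h t).1 ht with ht | ht
        · exact Or.inl ((ST φ hφ t).2 ht)
        · exact Or.inr ((ST ψ hψ t).2 ht)
  | imp φ ψ ih1 ih2 =>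
      intro h w
      have hφ : ∀ p, Formula.occurs p φ → ¬ ∃ χ : Formula, s χ = p :=
        fun p hp => h p (Or.inl hp)
      have hψ : ∀ p, Formula.occurs p ψ → ¬ ∃ χ : Formula, s χ = p :=
        fun p hp => h p (Or.inr hp)
      refine ⟨ih1 hφ w, ih2 hψ w, ?_, ?_⟩
      · intro t _ ht
        refine (ST _ h t).2 ?_
        intro t' htt' hφ'
        exact (ST ψ hψ t').1 (ht t' htt' ((ST φ hφ t').2 hφ'))
      · intro t _ ht t' htt' hsφ
        exact (ST ψ hψ t').2 ((ST _ h t).1 ht t' htt' ((ST φ hφ t').1 hsφ))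

end Aux
/-- a Kripke frame validates `φ` iff it validates its frame-normal form
`φ' = φ'_+ → s_φ` (for any choice of pairwise distinct fresh variables `s_ψ`). -/
theorem frame_normal_form (φ : Formula) (s : Formula → ℕ)
    (hinj : Function.Injective s)
    (hfresh : ∀ χ : Formula, ¬ Formula.occurs (s χ) φ)
    (F : KFrame) (hF : F.IsFrame) :
    F.valid φ ↔ F.valid (frameNF s φ) := by
  obtain ⟨hrefl, htrans, _⟩ := hF
  have hfresh' : ∀ p, Formula.occurs p φ → ¬ ∃ χ : Formula, s χ = p := by
    rintro p hp ⟨χ, rfl⟩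
    exact hfresh χ hp
  constructor
  · -- F ⊨ φ → F ⊨ φ'
    intro hv V hV w
    intro u hwu hplus
    have hφu : (F.model V).sat u φ := hv V hV u
    exact (svar_iff (F.model V) s htrans φ u hplus u (hrefl u)).2 hφu
  · -- F ⊨ φ' → F ⊨ φ
    intro hv V hV w
    classical
    -- extend V on the fresh variables by the truth values of the formulas
    set V' : F.W → ℕ → Bool := fun v p =>
      if h : ∃ χ : Formula, s χ = p then decide ((F.model V).sat v h.choose)
      else V v p with hV'def
    have hcomp : ∀ (ψ : Formula) (v), V' v (s ψ) = decide ((F.model V).sat v ψ) := by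
      intro ψ v
      have h : ∃ χ : Formula, s χ = s ψ := ⟨ψ, rfl⟩
      have hch : h.choose = ψ := hinj h.choose_spec
      simp only [hV'def, dif_pos h, hch]
    have hagree : ∀ p, (¬ ∃ χ : Formula, s χ = p) → ∀ v, V' v p = V v p := by
      intro p hp v
      simp only [hV'def, dif_neg hp]
    -- V' is persistent
    have hV' : F.Persistent V' := by
      intro v u p hvu h
      by_cases hp : ∃ χ : Formula, s χ = p
      · obtain ⟨χ, rfl⟩ := hp
        rw [hcomp] at h ⊢
        rw [decide_eq_true_iff] at h
        exact decide_eq_true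
          (sat_persist (F.model V) htrans hV χ v u hvu h)
      · rw [hagree p hp] at h ⊢
        exact hV v u p hvu h
    have hplus := plus_true F V V' s hcomp hagree φ hfresh' w
    have := hv V' hV' w w (hrefl w) hplus
    exact (svar_truth F V V' s hcomp hagree φ hfresh' w).1 this
end
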